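/- arXiv:2412.08768 — 8 statements merged into one kernel-verified Lean document; each statement's English description precedes it below -/
import Mathlib

section
/- For a convergent series of nonnegative terms (a_n), the achievement set E(a_n) = { x ∈ ℝ : ∃ A ⊆ ℕ, x = ∑_{n∈A} a_n } is a compact subset of ℝ. -/
/-- The achievement set (set of all subsums) of a series. -/
noncomputable def achSet (a : ℕ → ℝ) : Set ℝ :=
  {x | ∃ A : Set ℕ, HasSum (A.indicator a) x}

theorem subsums_compact (a : ℕ → ℝ) (hpos : ∀ n, 0 ≤ a n) (hsum : Summable a) :
    IsCompact (achSet a) := by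
  classical
  set F : (ℕ → Bool) → ℝ := fun b => ∑' n, (if b n then a n else 0) with hF
  have hcont : Continuous F := by
    apply continuous_tsum (u := a) ?_ hsum ?_
    · intro n
      exact (continuous_of_discreteTopology (f := fun v : Bool => if v then a n else 0)).comp (continuous_apply n)
    · intro n b
      rw [Real.norm_eq_abs, abs_of_nonneg (by split <;> simp [hpos n])]
      split <;> simp [hpos n]
  have hrange : Set.range F = achSet a := by
    ext x
    constructor
    · rintro ⟨b, rfl⟩
      refine ⟨{n | b n = true}, ?_⟩
      have h : ({n | b n = true} : Set ℕ).indicator a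
          = fun n => if b n then a n else 0 := by
        funext n
        by_cases h : b n <;> simp [Set.indicator, h]
      rw [h]
      have hs : Summable (fun n => if b n then a n else 0) := by
        apply Summable.of_nonneg_of_le (fun n => by split <;> simp [hpos n])
          (fun n => by split <;> simp [hpos n]) hsum
      exact hs.hasSum
    · rintro ⟨A, hA⟩
      refine ⟨fun n => decide (n ∈ A), ?_⟩
      have h : (fun n => if decide (n ∈ A) then a n else 0) = A.indicator a := by
        funext n
        by_cases h : n ∈ A <;> simp [Set.indicator, h]
      simp only [hF, h]
      exact hA.tsum_eq
  rw [← hrange]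
  exact isCompact_range hcont
end

section
/- For a convergent series of positive, non-increasing terms (a_n), if a_n > r_n (where r_n = ∑_{i>n} a_i) for only finitely many n, then the achievement set E(a_n) is a finite union of closed bounded intervals. -/
open Filter Finset

/-- The `n`-th remainder `r n = ∑_{i > n} a i`. -/
noncomputable def rem (a : ℕ → ℝ) (n : ℕ) : ℝ := ∑' j : ℕ, a (n + 1 + j)

/-- The full tail `∑_{j ≥ n} a j`. -/
noncomputable def ktail (b : ℕ → ℝ) (n : ℕ) : ℝ := ∑' j : ℕ, b (j + n)

lemma ksummable_shift (b : ℕ → ℝ) (hsum : Summable b) (n : ℕ) :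
    Summable fun j => b (j + n) := (summable_nat_add_iff n).mpr hsum

lemma krem_eq_tail (b : ℕ → ℝ) (n : ℕ) : rem b n = ktail b (n + 1) :=
  tsum_congr fun j => congrArg b (by omega)

lemma ktail_succ (b : ℕ → ℝ) (hsum : Summable b) (n : ℕ) :
    ktail b n = b n + ktail b (n + 1) := by
  have h := Summable.tsum_eq_zero_add (f := fun j => b (j + n)) (ksummable_shift b hsum n)
  rw [ktail, h]
  congr 1
  · simp
  · exact tsum_congr fun j => congrArg b (by omega)

lemma ktail_nonneg (b : ℕ → ℝ) (hnn : ∀ n, 0 ≤ b n) (n : ℕ) : 0 ≤ ktail b n :=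
  tsum_nonneg fun j => hnn _

lemma ktail_tendsto (b : ℕ → ℝ) : Tendsto (ktail b) atTop (nhds 0) :=
  tendsto_sum_nat_add b

/-- The greedy partial sums used in Kakeya's interval theorem. -/
noncomputable def greedy (b : ℕ → ℝ) (x : ℝ) : ℕ → ℝ
  | 0 => 0
  | n + 1 => greedy b x n + (if greedy b x n + b n ≤ x then b n else 0)

lemma greedy_invariant (b : ℕ → ℝ) (hsum : Summable b)
    (hr : ∀ n, b n ≤ rem b n) (x : ℝ) (hx0 : 0 ≤ x) (hxT : x ≤ ktail b 0) :
    ∀ n, 0 ≤ x - greedy b x n ∧ x - greedy b x n ≤ ktail b n := by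
  intro n
  induction n with
  | zero => constructor <;> simp [greedy, hx0, hxT]
  | succ n ih =>
    obtain ⟨h0, h1⟩ := ih
    have hts := ktail_succ b hsum n
    by_cases h : greedy b x n + b n ≤ x
    · simp only [greedy, if_pos h]
      constructor
      · linarith
      · linarith
    · simp only [greedy, if_neg h]
      push_neg at h
      have h2 : b n ≤ ktail b (n + 1) := by rw [← krem_eq_tail]; exact hr n
      constructor
      · linarith
      · linarith

lemma greedy_sum (b : ℕ → ℝ) (x : ℝ) (n : ℕ) :
    ∑ i ∈ Finset.range n, ({k | greedy b x k + b k ≤ x} : Set ℕ).indicator b i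
      = greedy b x n := by
  classical
  induction n with
  | zero => simp [greedy]
  | succ n ih =>
    rw [Finset.sum_range_succ, ih]
    show greedy b x n + _ = greedy b x (n + 1)
    rw [Set.indicator_apply]
    simp only [Set.mem_setOf_eq]
    rfl

/-- Kakeya's interval theorem: if every term is at most the following remainder,
the achievement set is the full interval. -/
lemma achSet_eq_Icc (b : ℕ → ℝ) (hnn : ∀ n, 0 ≤ b n) (hsum : Summable b)
    (hr : ∀ n, b n ≤ rem b n) : achSet b = Set.Icc 0 (ktail b 0) := by
  classical
  ext x
  constructor
  · rintro ⟨A, hA⟩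
    have hb : HasSum b (ktail b 0) := by
      have : ktail b 0 = ∑' j, b j := tsum_congr fun j => congrArg b (by omega)
      rw [this]; exact hsum.hasSum
    constructor
    · exact hasSum_le (fun i => Set.indicator_nonneg (fun j _ => hnn j) i)
        hasSum_zero hA
    · exact hasSum_le (fun i => Set.indicator_le_self' (fun j _ => hnn j) i) hA hb
  · rintro ⟨hx0, hxT⟩
    refine ⟨{k | greedy b x k + b k ≤ x}, ?_⟩
    rw [hasSum_iff_tendsto_nat_of_nonneg
      (fun i => Set.indicator_nonneg (fun j _ => hnn j) i)]
    have heq : (fun n => ∑ i ∈ Finset.range n,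
        ({k | greedy b x k + b k ≤ x} : Set ℕ).indicator b i) = greedy b x := by
      funext n; exact greedy_sum b x n
    rw [heq]
    have hinv := greedy_invariant b hsum hr x hx0 hxT
    have h0 : Tendsto (fun n => x - greedy b x n) atTop (nhds 0) :=
      squeeze_zero (fun n => (hinv n).1) (fun n => (hinv n).2) (ktail_tendsto b)
    have := tendsto_const_nhds (x := x) (f := atTop (α := ℕ)) |>.sub h0
    simpa using this

/-- Kakeya: if `a n > r n` for only finitely many `n`, then the achievement set is a
finite union of closed bounded intervals. -/
theorem kakeya_multiinterval (a : ℕ → ℝ) (hpos : ∀ n, 0 < a n) (hmono : Antitone a)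
    (hsum : Summable a) (hfin : {n | rem a n < a n}.Finite) :
    ∃ (m : ℕ) (f g : Fin m → ℝ), (∀ i, f i ≤ g i) ∧
      achSet a = ⋃ i, Set.Icc (f i) (g i) := by
  classical
  -- choose N beyond which a n ≤ rem a n
  obtain ⟨N₀, hN₀⟩ := hfin.bddAbove
  set N := N₀ + 1 with hNdef
  have key : ∀ n, N ≤ n → a n ≤ rem a n := by
    intro n hn
    by_contra h
    push_neg at h
    have := hN₀ (show n ∈ {n | rem a n < a n} from h)
    omega
  -- the tail series
  set b : ℕ → ℝ := fun j => a (j + N) with hbdef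
  have hb_nn : ∀ n, 0 ≤ b n := fun n => (hpos _).le
  have hb_sum : Summable b := ksummable_shift a hsum N
  have hb_rem : ∀ n, b n ≤ rem b n := by
    intro n
    have h1 : rem b n = rem a (n + N) := by
      rw [rem, rem]
      exact tsum_congr fun j => congrArg a (by omega)
    rw [h1]
    exact key (n + N) (Nat.le_add_left N n)
  set T := ktail b 0 with hTdef
  have hT0 : 0 ≤ T := ktail_nonneg b hb_nn 0
  have hIcc : achSet b = Set.Icc 0 T := achSet_eq_Icc b hb_nn hb_sum hb_rem
  set P := (Finset.range N).powerset with hPdef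
  refine ⟨P.card, fun i => ∑ n ∈ ((P.equivFin.symm i : P) : Finset ℕ), a n,
    fun i => (∑ n ∈ ((P.equivFin.symm i : P) : Finset ℕ), a n) + T, fun i => le_add_of_nonneg_right hT0, ?_⟩
  ext x
  simp only [Set.mem_iUnion]
  constructor
  · rintro ⟨A, hA⟩
    set s : Finset ℕ := (Finset.range N).filter (· ∈ A) with hsdef
    have hs : s ∈ P := Finset.mem_powerset.mpr (Finset.filter_subset _ _)
    set c := ∑ i ∈ Finset.range N, A.indicator a i with hcdef
    have h1 : HasSum (fun j => A.indicator a (j + N)) (x - c) := by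
      rw [hasSum_nat_add_iff (f := A.indicator a) N]
      simpa [hcdef] using hA
    have h2 : (fun j => A.indicator a (j + N))
        = (({j | j + N ∈ A} : Set ℕ).indicator b) := by
      funext j
      rw [Set.indicator_apply, Set.indicator_apply]
      simp only [Set.mem_setOf_eq]
      rfl
    rw [h2] at h1
    have h3 : x - c ∈ achSet b := ⟨_, h1⟩
    rw [hIcc] at h3
    have hc : c = ∑ n ∈ s, a n := by
      rw [hcdef, hsdef, Finset.sum_filter]
      exact Finset.sum_congr rfl fun n _ => Set.indicator_apply A a n
    refine ⟨P.equivFin ⟨s, hs⟩, ?_⟩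
    have hfix : ((P.equivFin.symm (P.equivFin ⟨s, hs⟩) : P) : Finset ℕ) = s := by
      simp
    rw [hfix, ← hc]
    obtain ⟨hy0, hyT⟩ := h3
    constructor <;> linarith
  · rintro ⟨i, hx⟩
    set s : Finset ℕ := ((P.equivFin.symm i : P) : Finset ℕ) with hsdef
    have hs : s ∈ P := (P.equivFin.symm i).2
    have hsub : s ⊆ Finset.range N := Finset.mem_powerset.mp hs
    set c := ∑ n ∈ s, a n with hcdef
    have hy : x - c ∈ Set.Icc 0 T := ⟨by simp only [Set.mem_Icc] at hx; linarith [hx.1],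
      by simp only [Set.mem_Icc] at hx; linarith [hx.2]⟩
    rw [← hIcc] at hy
    obtain ⟨B, hB⟩ := hy
    set A : Set ℕ := {n | n ∈ s ∨ (N ≤ n ∧ n - N ∈ B)} with hAdef
    refine ⟨A, ?_⟩
    have h2 : (fun j => A.indicator a (j + N)) = B.indicator b := by
      funext j
      rw [Set.indicator_apply, Set.indicator_apply]
      have hmem : (j + N ∈ A) ↔ j ∈ B := by
        simp only [hAdef, Set.mem_setOf_eq]
        constructor
        · rintro (h | ⟨_, h⟩)
          · exact absurd (Finset.mem_range.mp (hsub h)) (by omega)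
          · simpa using h
        · intro h
          exact Or.inr ⟨Nat.le_add_left N j, by simpa using h⟩
      simp only [hmem]
      rfl
    have h3 : HasSum (A.indicator a) ((x - c) + ∑ i ∈ Finset.range N, A.indicator a i) := by
      rw [← hasSum_nat_add_iff (f := A.indicator a) N, h2]
      exact hB
    have h4 : ∑ i ∈ Finset.range N, A.indicator a i = c := by
      have : ∀ n ∈ Finset.range N, A.indicator a n = if n ∈ s then a n else 0 := by
        intro n hn
        rw [Set.indicator_apply]
        have : (n ∈ A) ↔ n ∈ s := by
          simp only [hAdef, Set.mem_setOf_eq]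
          constructor
          · rintro (h | ⟨h, _⟩)
            · exact h
            · exact absurd (Finset.mem_range.mp hn) (by omega)
          · exact Or.inl
        simp only [this]
      rw [Finset.sum_congr rfl this, Finset.sum_ite_mem,
        Finset.inter_eq_right.mpr hsub]
    rw [h4] at h3
    simpa using h3
end

section
/- For a convergent series of positive, non-increasing terms (a_n), if a_n ≤ r_n for only finitely many n (where r_n = ∑_{i>n} a_i), then the achievement set E(a_n) is nowhere dense, i.e., has empty interior. -/
open Finset Filter

section Helpers

variable {b : ℕ → ℝ}

private lemma kk_split (hb : Summable b) (A : Set ℕ) (k : ℕ) :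
    ∑' n, A.indicator b n
      = (∑ i ∈ Finset.range k, A.indicator b i) + ∑' i, A.indicator b (i + k) :=
  (Summable.sum_add_tsum_nat_add k (hb.indicator A)).symm

private lemma kk_tail_nonneg (hb0 : ∀ n, 0 ≤ b n) (A : Set ℕ) (k : ℕ) :
    0 ≤ ∑' i, A.indicator b (i + k) :=
  tsum_nonneg fun i => Set.indicator_nonneg (fun n _ => hb0 n) _

private lemma kk_rem_eq (k : ℕ) : rem b k = ∑' i, b (i + (k + 1)) := by
  unfold rem
  exact tsum_congr fun i => congrArg b (by omega)

private lemma kk_tail_le_rem' (hb : Summable b) (hb0 : ∀ n, 0 ≤ b n) (A : Set ℕ) (k : ℕ) :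
    ∑' i, A.indicator b (i + (k + 1)) ≤ rem b k := by
  rw [kk_rem_eq]
  refine Summable.tsum_le_tsum (fun i => ?_) ((summable_nat_add_iff (k + 1)).2 (hb.indicator A))
    ((summable_nat_add_iff (k + 1)).2 hb)
  exact Set.indicator_le_self' (fun n _ => hb0 n) _

private lemma kk_tail_le_rem (hb : Summable b) (hb0 : ∀ n, 0 ≤ b n) {A : Set ℕ} {j : ℕ}
    (hj : j ∉ A) : ∑' i, A.indicator b (i + j) ≤ rem b j := by
  have hs : Summable (fun i => A.indicator b (i + j)) :=
    (summable_nat_add_iff j).2 (hb.indicator A)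
  rw [Summable.tsum_eq_zero_add hs]
  have h0 : A.indicator b (0 + j) = 0 := by
    simp [Set.indicator_of_notMem (by simpa using hj)]
  rw [h0, zero_add]
  calc ∑' i, A.indicator b (i + 1 + j)
      = ∑' i, A.indicator b (i + (j + 1)) := tsum_congr fun i => congrArg _ (by omega)
    _ ≤ rem b j := kk_tail_le_rem' hb hb0 A j

/-- The main "gap" lemma: if `rem b n < b n` for all `n`, then for any `m` and any set `A`,
no point of the achievement set lies strictly between `p + rem b m` and `p + b m`,
where `p` is the partial subsum of `A` below `m`. -/
private lemma kk_gap (hb : Summable b) (hb0 : ∀ n, 0 < b n) (hr : ∀ n, rem b n < b n)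
    (m : ℕ) (A : Set ℕ) {z : ℝ} (hz : z ∈ achSet b) :
    ¬ ((∑ i ∈ Finset.range m, A.indicator b i) + rem b m < z ∧
        z < (∑ i ∈ Finset.range m, A.indicator b i) + b m) := by
  classical
  have hb0' : ∀ n, 0 ≤ b n := fun n => (hb0 n).le
  obtain ⟨Z, hZ⟩ := hz
  have hzval : z = ∑' n, Z.indicator b n := hZ.tsum_eq.symm
  set p : ℝ := ∑ i ∈ Finset.range m, A.indicator b i with hp
  -- the comparison set
  set F : Set ℕ := {i | (i < m ∧ i ∈ A) ∨ m < i} with hF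
  have hFlt : ∀ i < m, F.indicator b i = A.indicator b i := by
    intro i hi
    by_cases hiA : i ∈ A
    · rw [Set.indicator_of_mem (by simp [hF, hi, hiA]), Set.indicator_of_mem hiA]
    · rw [Set.indicator_of_notMem (by simp [hF, hi, hiA, not_lt.2 hi.le]),
        Set.indicator_of_notMem hiA]
  have hFm : m ∉ F := by simp [hF]
  -- value of the subsum of F
  have hσF : ∑' n, F.indicator b n = p + rem b m := by
    rw [kk_split hb F (m + 1), Finset.sum_range_succ, Set.indicator_of_notMem hFm, add_zero]
    have h1 : ∑ i ∈ Finset.range m, F.indicator b i = p :=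
      Finset.sum_congr rfl fun i hi => hFlt i (Finset.mem_range.1 hi)
    have h2 : ∑' i, F.indicator b (i + (m + 1)) = rem b m := by
      rw [kk_rem_eq]
      exact tsum_congr fun i => Set.indicator_of_mem (by simp [hF]; omega) b
    rw [h1, h2]
  rintro ⟨hz1, hz2⟩
  by_cases hD : ∀ i, i ∈ Z ↔ i ∈ F
  · have : Z = F := Set.ext hD
    rw [hzval, this, hσF] at hz1
    exact lt_irrefl _ hz1
  · push_neg at hD
    have hEx : ∃ j, ¬ (j ∈ Z ↔ j ∈ F) := by
      obtain ⟨j, hj⟩ := hD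
      exact ⟨j, by tauto⟩
    let j := Nat.find hEx
    have hj : ¬ (j ∈ Z ↔ j ∈ F) := Nat.find_spec hEx
    have hjmin : ∀ i < j, (i ∈ Z ↔ i ∈ F) := by
      intro i hi
      by_contra h
      exact Nat.find_min hEx hi h
    set q : ℝ := ∑ i ∈ Finset.range j, Z.indicator b i with hq
    have hqF : q = ∑ i ∈ Finset.range j, F.indicator b i := by
      refine Finset.sum_congr rfl fun i hi => ?_
      have hiff := hjmin i (Finset.mem_range.1 hi)
      by_cases hiZ : i ∈ Z
      · rw [Set.indicator_of_mem hiZ, Set.indicator_of_mem (hiff.1 hiZ)]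
      · rw [Set.indicator_of_notMem hiZ, Set.indicator_of_notMem (fun h => hiZ (hiff.2 h))]
    by_cases hjZ : j ∈ Z
    · -- j ∈ Z, j ∉ F
      have hjF : j ∉ F := fun h => hj ⟨fun _ => h, fun _ => hjZ⟩
      have hjm : j ≤ m := by
        by_contra h
        exact hjF (by simp [hF]; omega)
      -- lower bound : q + b j ≤ z
      have hlow : q + b j ≤ z := by
        rw [hzval, kk_split hb Z (j + 1), Finset.sum_range_succ, Set.indicator_of_mem hjZ]
        have := kk_tail_nonneg hb0' Z (j + 1)
        rw [← hq]
        linarith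
      rcases eq_or_lt_of_le hjm with hjem | hjlt
      · -- j = m : contradiction with hz2
        have hqp : q = p := by
          rw [hqF, hp, hjem]
          exact Finset.sum_congr rfl fun i hi => hFlt i (Finset.mem_range.1 hi)
        rw [hqp, hjem] at hlow
        linarith
      · -- j < m
        have hjA : j ∉ A := by
          intro h
          exact hjF (by simp [hF]; exact Or.inl ⟨hjlt, h⟩)
        -- p + b m ≤ q + rem b j
        have hkey : p + b m ≤ q + rem b j := by
          have hsplit : p = (∑ i ∈ Finset.range j, A.indicator b i)
              + ∑ i ∈ Finset.Ico j m, A.indicator b i := by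
            rw [hp, Finset.range_eq_Ico, ← Finset.sum_Ico_consecutive _ (Nat.zero_le j) hjlt.le, Finset.range_eq_Ico]
          have h1 : (∑ i ∈ Finset.range j, A.indicator b i) = q := by
            rw [hqF]
            exact Finset.sum_congr rfl fun i hi =>
              (hFlt i ((Finset.mem_range.1 hi).trans hjlt)).symm
          have h2 : (∑ i ∈ Finset.Ico j m, A.indicator b i) + b m ≤ rem b j := by
            rw [Finset.sum_eq_sum_Ico_succ_bot hjlt, Set.indicator_of_notMem hjA, zero_add]
            have h3 : (∑ i ∈ Finset.Ico (j+1) m, A.indicator b i) + b m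
                ≤ ∑ i ∈ Finset.Ico (j+1) (m+1), b i := by
              rw [Finset.sum_Ico_succ_top hjlt, ]
              gcongr with i hi
              exact Set.indicator_le_self' (fun n _ => hb0' n) i
            have h4 : (∑ i ∈ Finset.Ico (j+1) (m+1), b i) ≤ rem b j := by
              rw [Finset.sum_Ico_eq_sum_range, kk_rem_eq]
              calc ∑ i ∈ Finset.range (m + 1 - (j + 1)), b (j + 1 + i)
                  = ∑ i ∈ Finset.range (m + 1 - (j + 1)), (fun i => b (i + (j+1))) i :=
                    Finset.sum_congr rfl fun i _ => congrArg b (by omega)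
                _ ≤ ∑' i, b (i + (j + 1)) :=
                    Summable.sum_le_tsum _ (fun i _ => hb0' _) ((summable_nat_add_iff (j+1)).2 hb)
            linarith
          rw [hsplit, h1]
          linarith
        have := hr j
        linarith
    · -- j ∉ Z, j ∈ F
      have hjF : j ∈ F := by
        by_contra h
        exact hj ⟨fun hz => absurd hz hjZ, fun hf => absurd hf h⟩
      -- upper bound : z ≤ q + rem b j
      have hup : z ≤ q + rem b j := by
        rw [hzval, kk_split hb Z j, ← hq]
        have := kk_tail_le_rem hb hb0' hjZ
        linarith
      -- lower bound : q + b j ≤ p + rem b m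
      have hlow : q + b j ≤ p + rem b m := by
        rw [← hσF, kk_split hb F (j + 1), Finset.sum_range_succ, Set.indicator_of_mem hjF,
          ← hqF]
        have := kk_tail_nonneg hb0' F (j + 1)
        linarith
      have := hr j
      linarith

/-- Cantor case of Kakeya's theorem for series with `rem b n < b n` for every `n`. -/
private lemma kk_cantor (hb : Summable b) (hb0 : ∀ n, 0 < b n) (hr : ∀ n, rem b n < b n) :
    interior (achSet b) = ∅ := by
  have hb0' : ∀ n, 0 ≤ b n := fun n => (hb0 n).le
  rw [Set.eq_empty_iff_forall_notMem]
  intro x hx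
  obtain ⟨A, hA⟩ : x ∈ achSet b := interior_subset hx
  obtain ⟨ε, hε, hball⟩ := Metric.mem_nhds_iff.mp (mem_interior_iff_mem_nhds.mp hx)
  -- pick m with b m < ε
  obtain ⟨m, hm⟩ : ∃ m, b m < ε := by
    have h := hb.tendsto_atTop_zero.eventually (gt_mem_nhds hε)
    exact h.exists
  set p : ℝ := ∑ i ∈ Finset.range m, A.indicator b i with hp
  -- x is between p and p + b m + rem b m
  have hxval : x = ∑' n, A.indicator b n := hA.tsum_eq.symm
  have hx1 : p ≤ x := by
    rw [hxval, kk_split hb A m, ← hp]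
    have := kk_tail_nonneg hb0' A m
    linarith
  have hx2 : x ≤ p + b m + rem b m := by
    rw [hxval, kk_split hb A m, ← hp]
    have hs : Summable (fun i => A.indicator b (i + m)) :=
      (summable_nat_add_iff m).2 (hb.indicator A)
    have htail : ∑' i, A.indicator b (i + m) ≤ b m + rem b m := by
      rw [Summable.tsum_eq_zero_add hs]
      have h1 : A.indicator b (0 + m) ≤ b m := by
        rw [zero_add]
        exact Set.indicator_le_self' (fun n _ => hb0' n) m
      have h2 : ∑' i, A.indicator b (i + 1 + m) ≤ rem b m := by
        calc ∑' i, A.indicator b (i + 1 + m)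
            = ∑' i, A.indicator b (i + (m + 1)) := tsum_congr fun i => congrArg _ (by omega)
          _ ≤ rem b m := kk_tail_le_rem' hb hb0' A m
      linarith
    linarith
  -- the midpoint of the gap
  set y : ℝ := p + (rem b m + b m) / 2 with hy
  have hrm0 : 0 ≤ rem b m := by
    rw [kk_rem_eq]
    exact tsum_nonneg fun i => hb0' _
  have hyx : dist y x < ε := by
    rw [Real.dist_eq, abs_lt]
    constructor <;> [skip; skip] <;>
      · have := hr m
        simp only [hy]
        linarith
  have hyE : y ∈ achSet b := hball (Metric.mem_ball.mpr hyx)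
  refine kk_gap hb hb0 hr m A hyE ⟨?_, ?_⟩ <;>
    · have := hr m
      simp only [hy, ← hp]
      linarith

/-- The achievement set of a summable nonnegative sequence is compact. -/
private lemma kk_isCompact (ha : Summable b) (ha0 : ∀ n, 0 ≤ b n) :
    IsCompact (achSet b) := by
  classical
  set Φ : (ℕ → Bool) → ℝ := fun f => ∑' n, ({n | f n = true} : Set ℕ).indicator b n with hΦ
  have hcont : Continuous Φ := by
    have huc : TendstoUniformly
        (fun (k : ℕ) (f : ℕ → Bool) =>
          ∑ n ∈ Finset.range k, ({n | f n = true} : Set ℕ).indicator b n)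
        Φ atTop := by
      rw [Metric.tendstoUniformly_iff]
      intro ε hε
      have htail : Tendsto (fun k => ∑' i, b (i + k)) atTop (nhds 0) := by
        have := tendsto_sum_nat_add b
        simpa using this
      filter_upwards [htail.eventually (gt_mem_nhds hε)] with k hk f
      have hsplit := kk_split ha ({n | f n = true} : Set ℕ) k
      simp only [Real.dist_eq, hΦ]
      have h1 : 0 ≤ ∑' i, ({n | f n = true} : Set ℕ).indicator b (i + k) :=
        kk_tail_nonneg ha0 _ k
      have h2 : ∑' i, ({n | f n = true} : Set ℕ).indicator b (i + k) ≤ ∑' i, b (i + k) :=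
        Summable.tsum_le_tsum (fun i => Set.indicator_le_self' (fun n _ => ha0 n) _)
          ((summable_nat_add_iff k).2 (ha.indicator _)) ((summable_nat_add_iff k).2 ha)
      rw [abs_lt]
      constructor <;> [skip; skip] <;>
        · rw [hsplit]
          linarith
    refine huc.continuous (Filter.Frequently.of_forall fun k => ?_)
    refine continuous_finset_sum _ fun n _ => ?_
    have : (fun (f : ℕ → Bool) => ({n | f n = true} : Set ℕ).indicator b n)
        = (fun (t : Bool) => if t = true then b n else 0) ∘ (fun f => f n) := by
      funext f
      simp [Set.indicator_apply]
    rw [this]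
    exact Continuous.comp (continuous_of_discreteTopology) (continuous_apply n)
  have hrange : achSet b = Set.range Φ := by
    ext x
    constructor
    · rintro ⟨A, hA⟩
      refine ⟨fun n => decide (n ∈ A), ?_⟩
      have hset : ({n | decide (n ∈ A) = true} : Set ℕ) = A := by
        ext n; simp
      rw [hΦ]
      simp only [hset]
      exact hA.tsum_eq
    · rintro ⟨f, rfl⟩
      exact ⟨{n | f n = true}, (ha.indicator _).hasSum⟩
  rw [hrange]
  exact isCompact_range hcont

private lemma kk_interior_union {α : Type*} [TopologicalSpace α] {s t : Set α}
    (hs : IsClosed s) (h1 : interior s = ∅) (h2 : interior t = ∅) :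
    interior (s ∪ t) = ∅ := by
  have hsub : interior (s ∪ t) ⊆ s := by
    intro x hx
    by_contra hxs
    have hopen : IsOpen (interior (s ∪ t) ∩ sᶜ) := isOpen_interior.inter hs.isOpen_compl
    have hsubt : interior (s ∪ t) ∩ sᶜ ⊆ t := by
      rintro z ⟨hz1, hz2⟩
      rcases interior_subset hz1 with h | h
      · exact absurd h hz2
      · exact h
    have : interior (s ∪ t) ∩ sᶜ ⊆ interior t := interior_maximal hsubt hopen
    rw [h2] at this
    exact this ⟨hx, hxs⟩
  have : interior (s ∪ t) ⊆ interior s := interior_maximal hsub isOpen_interior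
  rw [h1] at this
  exact Set.subset_empty_iff.mp this

private lemma kk_interior_biUnion {ι : Type*} [DecidableEq ι] (s : Finset ι) (f : ι → Set ℝ)
    (hc : ∀ i ∈ s, IsClosed (f i)) (hi : ∀ i ∈ s, interior (f i) = ∅) :
    interior (⋃ i ∈ s, f i) = ∅ := by
  induction s using Finset.induction_on with
  | empty => simp
  | @insert a s ha ih =>
    rw [Finset.set_biUnion_insert]
    exact kk_interior_union (hc a (Finset.mem_insert_self a s))
      (hi a (Finset.mem_insert_self a s))
      (ih (fun i hi' => hc i (Finset.mem_insert_of_mem hi'))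
        (fun i hi' => hi i (Finset.mem_insert_of_mem hi')))

end Helpers

/-- Kakeya: if `a n ≤ r n` for only finitely many `n`, then the achievement set
has empty interior (is nowhere dense). -/
theorem kakeya_cantor (a : ℕ → ℝ) (hpos : ∀ n, 0 < a n) (hmono : Antitone a)
    (hsum : Summable a) (hfin : {n | a n ≤ rem a n}.Finite) :
    interior (achSet a) = ∅ := by
  classical
  -- find N beyond which a n > rem a n
  obtain ⟨N, hN⟩ : ∃ N, ∀ n, N ≤ n → rem a n < a n := by
    obtain ⟨M, hM⟩ := hfin.bddAbove
    refine ⟨M + 1, fun n hn => ?_⟩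
    by_contra h
    push_neg at h
    have : n ∈ {n | a n ≤ rem a n} := h
    have := hM this
    omega
  set b : ℕ → ℝ := fun j => a (j + N) with hbdef
  have hb : Summable b := (summable_nat_add_iff N).2 hsum
  have hb0 : ∀ n, 0 < b n := fun n => hpos _
  have hremb : ∀ n, rem b n = rem a (n + N) := by
    intro n
    unfold rem
    exact tsum_congr fun j => congrArg a (by omega)
  have hrb : ∀ n, rem b n < b n := by
    intro n
    rw [hremb n]
    exact hN (n + N) (by omega)
  have hcomp : IsCompact (achSet b) := kk_isCompact hb (fun n => (hb0 n).le)
  have hintb : interior (achSet b) = ∅ := kk_cantor hb hb0 hrb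
  -- the decomposition into finitely many translates
  set U : Set ℝ :=
    ⋃ G ∈ (Finset.range N).powerset, ((∑ i ∈ G, a i) + ·) '' achSet b with hU
  have hsub : achSet a ⊆ U := by
    rintro x ⟨A, hA⟩
    have hxval : x = ∑' n, A.indicator a n := hA.tsum_eq.symm
    set G : Finset ℕ := (Finset.range N).filter (· ∈ A) with hG
    set B : Set ℕ := {i | i + N ∈ A} with hB
    have hy : (∑' i, B.indicator b i) ∈ achSet b := ⟨B, (hb.indicator B).hasSum⟩
    have hGsum : ∑ i ∈ Finset.range N, A.indicator a i = ∑ i ∈ G, a i := by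
      rw [hG, Finset.sum_filter]
      exact Finset.sum_congr rfl fun i _ => by simp [Set.indicator_apply]
    have htaileq : ∑' i, A.indicator a (i + N) = ∑' i, B.indicator b i := by
      refine tsum_congr fun i => ?_
      by_cases h : i + N ∈ A
      · rw [Set.indicator_of_mem h, Set.indicator_of_mem (by simpa [hB] using h)]
      · rw [Set.indicator_of_notMem h, Set.indicator_of_notMem (by simpa [hB] using h)]
    have hxeq : x = (∑ i ∈ G, a i) + ∑' i, B.indicator b i := by
      rw [hxval, kk_split hsum A N, hGsum, htaileq]
    rw [hU]
    have hGmem : G ∈ (Finset.range N).powerset := Finset.mem_powerset.mpr (Finset.filter_subset _ _)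
    exact Set.mem_biUnion hGmem ⟨_, hy, hxeq.symm⟩
  have hUint : interior U = ∅ := by
    rw [hU]
    refine kk_interior_biUnion _ _ (fun G _ => ?_) (fun G _ => ?_)
    · exact ((Homeomorph.addLeft (∑ i ∈ G, a i)).isClosedEmbedding.isClosed_iff_image_isClosed.mp
        hcomp.isClosed)
    · have := (Homeomorph.addLeft (∑ i ∈ G, a i)).image_interior (achSet b)
      rw [hintb] at this
      simp only [Set.image_empty] at this
      exact this.symm ▸ rfl
  have : interior (achSet a) ⊆ interior U := interior_mono hsub
  rw [hUint] at this
  exact Set.subset_empty_iff.mp this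
end

section
/- Fix n ∈ ℕ, n ≥ 1, and define b_1 := 2^{n+1}, b_2 := 2^n + 1, and b_j := 2^{n+3-j} for 3 ≤ j ≤ n+2. Then the set of all subsums { ∑_{j∈A} b_j : A ⊆ {1,…,n+2} } equals {2j−2 : 1 ≤ j ≤ 2^{n−1}} ∪ {j : 2^n ≤ j ≤ 4·2^n − 1} ∪ {4·2^n − 1 + 2j : 1 ≤ j ≤ 2^{n−1}}. -/
lemma sum_range_two_pow' (n : ℕ) : ∑ i ∈ Finset.range n, 2^i = 2^n - 1 := by
  induction n with
  | zero => simp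
  | succ k ih =>
    rw [Finset.sum_range_succ, ih]
    have h1 : 1 ≤ 2^k := Nat.one_le_two_pow
    have h2 : 2^(k+1) = 2^k * 2 := pow_succ 2 k
    omega

lemma exists_subset_range' (n : ℕ) : ∀ m, m < 2^n →
    ∃ A ⊆ Finset.range n, m = ∑ i ∈ A, 2^i := by
  induction n with
  | zero => intro m h; exact ⟨∅, by simp, by simpa using Nat.lt_one_iff.mp h⟩
  | succ k ih =>
    intro m h
    by_cases hm : m < 2^k
    · obtain ⟨A, hA, hs⟩ := ih m hm
      exact ⟨A, hA.trans (Finset.range_subset_range.2 (Nat.le_succ k)), hs⟩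
    · have h2 : 2^(k+1) = 2^k * 2 := pow_succ 2 k
      obtain ⟨A, hA, hs⟩ := ih (m - 2^k) (by omega)
      have hk : k ∉ A := fun hk => by simpa using hA hk
      refine ⟨insert k A, ?_, ?_⟩
      · intro x hx
        rcases Finset.mem_insert.1 hx with rfl | hx
        · exact Finset.self_mem_range_succ x
        · exact Finset.range_subset_range.2 (Nat.le_succ k) (hA hx)
      · rw [Finset.sum_insert hk, ← hs]; omega

lemma transfer' (n : ℕ) (b : ℕ → ℕ)
    (hbj : ∀ j, 3 ≤ j → j ≤ n + 2 → b j = 2 ^ (n + 3 - j)) (x : ℕ) :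
    (∃ A ⊆ Finset.Icc 3 (n+2), x = ∑ j ∈ A, b j) ↔
    (∃ m, m ≤ 2^n - 1 ∧ x = 2 * m) := by
  constructor
  · rintro ⟨A, hA, rfl⟩
    have hmem : ∀ j ∈ A, 3 ≤ j ∧ j ≤ n + 2 := fun j hj => by
      have := hA hj; simp [Finset.mem_Icc] at this; exact this
    refine ⟨∑ j ∈ A, 2^(n + 2 - j), ?_, ?_⟩
    · have himg : A.image (fun j => n + 2 - j) ⊆ Finset.range n := by
        intro i hi
        obtain ⟨j, hj, rfl⟩ := Finset.mem_image.1 hi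
        have := hmem j hj
        simp [Finset.mem_range]; omega
      have hinj : ∀ j₁ ∈ A, ∀ j₂ ∈ A, n + 2 - j₁ = n + 2 - j₂ → j₁ = j₂ := by
        intro j₁ h₁ j₂ h₂ h
        have := hmem j₁ h₁; have := hmem j₂ h₂; omega
      have := Finset.sum_image (f := fun i => 2^i) (g := fun j => n + 2 - j) hinj
      calc ∑ j ∈ A, 2^(n + 2 - j)
          = ∑ i ∈ A.image (fun j => n + 2 - j), 2^i := this.symm
        _ ≤ ∑ i ∈ Finset.range n, 2^i :=
            Finset.sum_le_sum_of_subset himg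
        _ = 2^n - 1 := sum_range_two_pow' n
    · rw [Finset.mul_sum]
      refine Finset.sum_congr rfl fun j hj => ?_
      obtain ⟨h3, h4⟩ := hmem j hj
      rw [hbj j h3 h4]
      have : n + 3 - j = (n + 2 - j) + 1 := by omega
      rw [this, pow_succ]
      ring
  · rintro ⟨m, hm, rfl⟩
    have h1 : 1 ≤ 2^n := Nat.one_le_two_pow
    obtain ⟨B, hB, hs⟩ := exists_subset_range' n m (by omega)
    have hBmem : ∀ i ∈ B, i < n := fun i hi => Finset.mem_range.1 (hB hi)
    refine ⟨B.image (fun i => n + 2 - i), ?_, ?_⟩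
    · intro j hj
      obtain ⟨i, hi, rfl⟩ := Finset.mem_image.1 hj
      have := hBmem i hi
      simp [Finset.mem_Icc]; omega
    · have hinj : ∀ i₁ ∈ B, ∀ i₂ ∈ B, n + 2 - i₁ = n + 2 - i₂ → i₁ = i₂ := by
        intro i₁ h₁ i₂ h₂ h
        have := hBmem i₁ h₁; have := hBmem i₂ h₂; omega
      rw [Finset.sum_image hinj, hs, Finset.mul_sum]
      refine Finset.sum_congr rfl fun i hi => ?_
      have hi' := hBmem i hi
      rw [hbj (n + 2 - i) (by omega) (by omega)]
      have : n + 3 - (n + 2 - i) = i + 1 := by omega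
      rw [this, pow_succ]
      ring

/-- The set of subsums of the group `b 1 = 2^(n+1)`, `b 2 = 2^n + 1`,
`b j = 2^(n+3-j)` for `3 ≤ j ≤ n+2`. -/
theorem subsums_of_group (n : ℕ) (hn : 1 ≤ n) (b : ℕ → ℕ)
    (hb1 : b 1 = 2 ^ (n + 1)) (hb2 : b 2 = 2 ^ n + 1)
    (hbj : ∀ j, 3 ≤ j → j ≤ n + 2 → b j = 2 ^ (n + 3 - j)) :
    {x : ℕ | ∃ A ⊆ Finset.Icc 1 (n + 2), x = ∑ j ∈ A, b j} =
      {x : ℕ | ∃ j, 1 ≤ j ∧ j ≤ 2 ^ (n - 1) ∧ x = 2 * j - 2}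
      ∪ {x : ℕ | 2 ^ n ≤ x ∧ x ≤ 4 * 2 ^ n - 1}
      ∪ {x : ℕ | ∃ j, 1 ≤ j ∧ j ≤ 2 ^ (n - 1) ∧ x = 4 * 2 ^ n - 1 + 2 * j} := by
  have hP : 2 * 2^(n-1) = 2^n := by
    have h : 2^(n-1) * 2 = 2^(n-1+1) := (pow_succ 2 (n-1)).symm
    have h2 : n - 1 + 1 = n := by omega
    rw [h2] at h; omega
  have hP1 : 2^(n+1) = 2 * 2^n := by rw [pow_succ]; ring
  have hone : 1 ≤ 2^(n-1) := Nat.one_le_two_pow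
  ext x
  simp only [Set.mem_setOf_eq, Set.mem_union]
  constructor
  · rintro ⟨A, hA, rfl⟩
    have hsub : A \ {1, 2} ⊆ Finset.Icc 3 (n+2) := by
      intro j hj
      rw [Finset.mem_sdiff] at hj
      have h1 := hA hj.1
      have h2 := hj.2
      simp [Finset.mem_Icc] at h1 ⊢
      simp at h2
      omega
    obtain ⟨m, hm, hsum⟩ := (transfer' n b hbj _).1 ⟨A \ {1, 2}, hsub, rfl⟩
    have h1n : 1 ∉ A \ ({1, 2} : Finset ℕ) := by simp
    have h2n : 2 ∉ A \ ({1, 2} : Finset ℕ) := by simp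
    by_cases h1 : 1 ∈ A <;> by_cases h2 : 2 ∈ A
    · -- both
      have hAeq : A = insert 1 (insert 2 (A \ {1, 2})) := by
        ext j
        simp only [Finset.mem_insert, Finset.mem_sdiff, Finset.mem_insert,
          Finset.mem_singleton]
        constructor
        · intro hj; by_cases e1 : j = 1; · tauto
          by_cases e2 : j = 2; · tauto
          tauto
        · rintro (rfl | rfl | ⟨hj, _⟩) <;> assumption
      rw [hAeq, Finset.sum_insert (by simp [h2n]), Finset.sum_insert h2n, hb1, hb2, hsum]
      by_cases hc : 2^(n+1) + (2^n + 1 + 2 * m) ≤ 4 * 2^n - 1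
      · left; right; constructor <;> omega
      · right
        exact ⟨m + 1 - 2^(n-1), by omega, by omega, by omega⟩
    · -- 1 only
      have hAeq : A = insert 1 (A \ {1, 2}) := by
        ext j
        simp only [Finset.mem_insert, Finset.mem_sdiff, Finset.mem_insert,
          Finset.mem_singleton]
        constructor
        · intro hj; by_cases e1 : j = 1; · tauto
          have : j ≠ 2 := fun h => h2 (h ▸ hj)
          tauto
        · rintro (rfl | ⟨hj, _⟩) <;> assumption
      rw [hAeq, Finset.sum_insert h1n, hb1, hsum]
      left; right; constructor <;> omega
    · -- 2 only
      have hAeq : A = insert 2 (A \ {1, 2}) := by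
        ext j
        simp only [Finset.mem_insert, Finset.mem_sdiff, Finset.mem_insert,
          Finset.mem_singleton]
        constructor
        · intro hj; by_cases e2 : j = 2; · tauto
          have : j ≠ 1 := fun h => h1 (h ▸ hj)
          tauto
        · rintro (rfl | ⟨hj, _⟩) <;> assumption
      rw [hAeq, Finset.sum_insert h2n, hb2, hsum]
      left; right; constructor <;> omega
    · -- neither
      have hAeq : A = A \ {1, 2} := by
        ext j
        simp only [Finset.mem_sdiff, Finset.mem_insert, Finset.mem_singleton]
        constructor
        · intro hj
          refine ⟨hj, ?_⟩
          rintro (rfl | rfl) <;> [exact h1 hj; exact h2 hj]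
        · exact fun h => h.1
      rw [hAeq, hsum]
      by_cases hc : m + 1 ≤ 2^(n-1)
      · left; left; exact ⟨m + 1, by omega, hc, by omega⟩
      · left; right; constructor <;> omega
  · have hIcc : Finset.Icc 3 (n+2) ⊆ Finset.Icc 1 (n+2) :=
      Finset.Icc_subset_Icc (by omega) le_rfl
    have key : ∀ c₁ c₂ m : ℕ, (c₁ = 0 ∨ c₁ = 1) → (c₂ = 0 ∨ c₂ = 1) → m ≤ 2^n - 1 →
        ∃ A ⊆ Finset.Icc 1 (n + 2),
          c₁ * 2^(n+1) + c₂ * (2^n + 1) + 2 * m = ∑ j ∈ A, b j := by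
      intro c₁ c₂ m hc₁ hc₂ hm
      obtain ⟨A, hA, hs⟩ := (transfer' n b hbj (2 * m)).2 ⟨m, hm, rfl⟩
      have h1n : 1 ∉ A := fun h => by have := hA h; simp only [Finset.mem_Icc] at this; omega
      have h2n : 2 ∉ A := fun h => by have := hA h; simp only [Finset.mem_Icc] at this; omega
      rcases hc₁ with rfl | rfl <;> rcases hc₂ with rfl | rfl
      · exact ⟨A, hA.trans hIcc, by rw [← hs]; ring⟩
      · refine ⟨insert 2 A, ?_, ?_⟩
        · intro j hj
          rcases Finset.mem_insert.1 hj with rfl | hj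
          · simp only [Finset.mem_Icc]; omega
          · exact hIcc (hA hj)
        · rw [Finset.sum_insert h2n, hb2, ← hs]; ring
      · refine ⟨insert 1 A, ?_, ?_⟩
        · intro j hj
          rcases Finset.mem_insert.1 hj with rfl | hj
          · simp only [Finset.mem_Icc]; omega
          · exact hIcc (hA hj)
        · rw [Finset.sum_insert h1n, hb1, ← hs]; ring
      · refine ⟨insert 1 (insert 2 A), ?_, ?_⟩
        · intro j hj
          rcases Finset.mem_insert.1 hj with rfl | hj
          · simp only [Finset.mem_Icc]; omega
          rcases Finset.mem_insert.1 hj with rfl | hj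
          · simp only [Finset.mem_Icc]; omega
          · exact hIcc (hA hj)
        · rw [Finset.sum_insert (by simp [h1n]), Finset.sum_insert h2n, hb1, hb2, ← hs]
          ring
    rintro ((⟨j, hj1, hj2, rfl⟩ | ⟨hx1, hx2⟩) | ⟨j, hj1, hj2, rfl⟩)
    · obtain ⟨A, hA, hs⟩ := key 0 0 (j - 1) (Or.inl rfl) (Or.inl rfl) (by omega)
      exact ⟨A, hA, by omega⟩
    · rcases Nat.even_or_odd x with ⟨k, hk⟩ | ⟨k, hk⟩
      · by_cases hle : x ≤ 2^(n+1) - 2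
        · obtain ⟨A, hA, hs⟩ := key 0 0 k (Or.inl rfl) (Or.inl rfl) (by omega)
          exact ⟨A, hA, by omega⟩
        · obtain ⟨A, hA, hs⟩ := key 1 0 (k - 2^n) (Or.inr rfl) (Or.inl rfl) (by omega)
          exact ⟨A, hA, by omega⟩
      · by_cases hle : x ≤ 3 * 2^n - 1
        · obtain ⟨A, hA, hs⟩ := key 0 1 (k - 2^(n-1)) (Or.inl rfl) (Or.inr rfl) (by omega)
          exact ⟨A, hA, by omega⟩
        · obtain ⟨A, hA, hs⟩ := key 1 1 (k - 3 * 2^(n-1)) (Or.inr rfl) (Or.inr rfl) (by omega)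
          exact ⟨A, hA, by omega⟩
    · obtain ⟨A, hA, hs⟩ := key 1 1 (j - 1 + 2^(n-1)) (Or.inr rfl) (Or.inr rfl) (by omega)
      exact ⟨A, hA, by omega⟩
end

section
/- In the Marchwicki–Miska construction (with (a_i), (q_k), N_k as above and r_i = ∑_{j>i} a_j), the set K^c := { i : a_i ≤ r_i } equals ⋃_{k≥1} { N_{k-1}+1, N_{k-1}+2 }; equivalently, a_i > r_i exactly for the indices i with N_{k-1}+3 ≤ i ≤ N_k for some k. -/
def mmB (n j : ℕ) : ℕ :=
  if j = 1 then 2 ^ (n + 1) else if j = 2 then 2 ^ n + 1 else 2 ^ (n + 3 - j)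

lemma mmB_pos (n j : ℕ) : 0 < mmB n j := by
  unfold mmB; split_ifs <;> positivity

lemma geo (m : ℕ) : ∑ i ∈ Finset.range m, 2 ^ (m - i) = 2 ^ (m + 1) - 2 := by
  induction m with
  | zero => simp
  | succ m ih =>
    rw [Finset.sum_range_succ']
    simp only [Nat.succ_sub_succ, Nat.sub_zero]
    rw [ih]
    have h0 : 1 ≤ 2 ^ m := Nat.one_le_two_pow
    have h1 : 2 ^ (m + 1) = 2 * 2 ^ m := by ring
    have h2 : 2 ^ (m + 1 + 1) = 2 * 2 ^ (m + 1) := by ring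
    omega

lemma T2 (n : ℕ) : ∑ i ∈ Finset.range n, mmB n (3 + i) = 2 ^ (n + 1) - 2 := by
  have h : ∀ i ∈ Finset.range n, mmB n (3 + i) = 2 ^ (n - i) := by
    intro i hi
    simp only [Finset.mem_range] at hi
    unfold mmB
    rw [if_neg (by omega), if_neg (by omega)]
    congr 1
    omega
  rw [Finset.sum_congr rfl h, geo]

lemma T1 (n : ℕ) : ∑ i ∈ Finset.range (n + 1), mmB n (2 + i) = 3 * 2 ^ n - 1 := by
  rw [Finset.sum_range_succ']
  have h : ∀ i ∈ Finset.range n, mmB n (2 + (i + 1)) = mmB n (3 + i) := by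
    intro i _; congr 1; omega
  rw [Finset.sum_congr rfl h, T2]
  have e : mmB n (2 + 0) = 2 ^ n + 1 := by unfold mmB; norm_num
  rw [e]
  have h0 : 1 ≤ 2 ^ n := Nat.one_le_two_pow
  have h2 : 2 ^ (n + 1) = 2 * 2 ^ n := by ring
  omega

lemma T0 (n : ℕ) : ∑ i ∈ Finset.range (n + 2), mmB n (1 + i) = 5 * 2 ^ n - 1 := by
  rw [Finset.sum_range_succ']
  have h : ∀ i ∈ Finset.range (n + 1), mmB n (1 + (i + 1)) = mmB n (2 + i) := by
    intro i _; congr 1; omega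
  rw [Finset.sum_congr rfl h, T1]
  have e : mmB n (1 + 0) = 2 ^ (n + 1) := by unfold mmB; norm_num
  rw [e]
  have h1 : 1 ≤ 2 ^ n := Nat.one_le_two_pow
  have h2 : 2 ^ (n + 1) = 2 * 2 ^ n := by ring
  omega

lemma T3 (n j : ℕ) (h3 : 3 ≤ j) (hj : j ≤ n + 2) :
    ∑ i ∈ Finset.range (n + 2 - j), mmB n (j + 1 + i) = 2 ^ (n + 3 - j) - 2 := by
  have h : ∀ i ∈ Finset.range (n + 2 - j), mmB n (j + 1 + i) = 2 ^ ((n + 2 - j) - i) := by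
    intro i hi
    simp only [Finset.mem_range] at hi
    unfold mmB
    rw [if_neg (by omega), if_neg (by omega)]
    congr 1
    omega
  rw [Finset.sum_congr rfl h, geo]
  congr 2
  omega

/-- In the Marchwicki–Miska construction, the reversed Kakeya conditions `a i ≤ r i`
hold exactly at the first two indices of each group. -/
theorem mm_reversed_kakeya (n N : ℕ → ℕ) (q a : ℕ → ℝ)
    (hn : ∀ k, 1 ≤ k → 1 ≤ n k)
    (hN0 : N 0 = 0) (hN : ∀ k, N (k + 1) = N k + (n (k + 1) + 2))
    (hq1 : q 1 = 1) (hq : ∀ k, 1 ≤ k → q (k + 1) = q k / (3 * 2 ^ n (k + 1)))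
    (ha : ∀ k i, 1 ≤ i → i ≤ n (k + 1) + 2 →
      a (N k + i) = (mmB (n (k + 1)) i : ℝ) * q (k + 1)) :
    {i : ℕ | 1 ≤ i ∧ a i ≤ rem a i} = ⋃ k : ℕ, ({N k + 1, N k + 2} : Set ℕ) := by
  classical
  -- positivity of q
  have q_pos : ∀ k, 1 ≤ k → 0 < q k := by
    intro k hk
    induction k, hk using Nat.le_induction with
    | base => rw [hq1]; norm_num
    | succ k hk ih =>
      rw [hq k hk]
      exact div_pos ih (by positivity)
  -- q recursion in product form
  have hq' : ∀ k, 1 ≤ k → (3 : ℝ) * 2 ^ n (k + 1) * q (k + 1) = q k := by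
    intro k hk
    rw [hq k hk]
    field_simp
  -- positivity of a within groups
  have a_pos : ∀ k i, 1 ≤ i → i ≤ n (k + 1) + 2 → 0 < a (N k + i) := by
    intro k i h1 h2
    rw [ha k i h1 h2]
    exact mul_pos (by exact_mod_cast mmB_pos _ _) (q_pos (k + 1) (by omega))
  -- decomposition of indices
  have Nmono : ∀ k, k ≤ N k := by
    intro k
    induction k with
    | zero => omega
    | succ k ih => rw [hN]; omega
  have decomp : ∀ i, 1 ≤ i → ∃ k j, 1 ≤ j ∧ j ≤ n (k + 1) + 2 ∧ i = N k + j := by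
    intro i hi
    have hex : ∃ k, i ≤ N k := ⟨i, Nmono i⟩
    have hk : i ≤ N (Nat.find hex) := Nat.find_spec hex
    have hk0 : Nat.find hex ≠ 0 := by
      intro h
      rw [h, hN0] at hk
      omega
    obtain ⟨k', hkk⟩ : ∃ k', Nat.find hex = k' + 1 := ⟨Nat.find hex - 1, by omega⟩
    have hlt : N k' < i := by
      by_contra h
      push_neg at h
      exact Nat.find_min hex (by omega) h
    rw [hkk] at hk
    have hNk := hN k'
    exact ⟨k', i - N k', by omega, by omega, by omega⟩
  have a_pos_all : ∀ i, 1 ≤ i → 0 < a i := by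
    intro i hi
    obtain ⟨k, j, h1, h2, rfl⟩ := decomp i hi
    exact a_pos k j h1 h2
  -- full group sums
  have grp : ∀ k, ∑ i ∈ Finset.range (n (k + 1) + 2), a (N k + 1 + i)
      = ((5 * 2 ^ n (k + 1) - 1 : ℕ) : ℝ) * q (k + 1) := by
    intro k
    have h : ∀ i ∈ Finset.range (n (k + 1) + 2),
        a (N k + 1 + i) = (mmB (n (k + 1)) (1 + i) : ℝ) * q (k + 1) := by
      intro i hi
      simp only [Finset.mem_range] at hi
      rw [add_assoc]
      exact ha k (1 + i) (by omega) (by omega)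
    rw [Finset.sum_congr rfl h, ← Finset.sum_mul, ← Nat.cast_sum, T0]
  -- key partial-sum bound
  have key : ∀ M k, ∑ i ∈ Finset.range M, a (N k + 1 + i)
      ≤ ((6 * 2 ^ n (k + 1) : ℕ) : ℝ) * q (k + 1) := by
    intro M
    induction M using Nat.strong_induction_on with
    | _ M ih =>
      intro k
      have hq2 : 0 < q (k + 1) := q_pos (k + 1) (by omega)
      by_cases hM : M ≤ n (k + 1) + 2
      · have h1 : ∑ i ∈ Finset.range M, a (N k + 1 + i)
            ≤ ∑ i ∈ Finset.range (n (k + 1) + 2), a (N k + 1 + i) := by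
          apply Finset.sum_le_sum_of_subset_of_nonneg
          · exact Finset.range_subset_range.mpr hM
          · intro i hi _
            simp only [Finset.mem_range] at hi
            have := a_pos k (1 + i) (by omega) (by omega)
            rw [← add_assoc] at this
            exact this.le
        rw [grp k] at h1
        refine h1.trans ?_
        apply mul_le_mul_of_nonneg_right _ hq2.le
        exact_mod_cast Nat.sub_le _ _ |>.trans (by nlinarith [Nat.one_le_two_pow (n := n (k + 1))])
      · obtain ⟨M', rfl⟩ : ∃ M', M = (n (k + 1) + 2) + M' := ⟨M - (n (k + 1) + 2), by omega⟩
        rw [Finset.sum_range_add]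
        have e2 : ∀ i ∈ Finset.range M',
            a (N k + 1 + (n (k + 1) + 2 + i)) = a (N (k + 1) + 1 + i) := by
          intro i _
          congr 1
          rw [hN k]
          omega
        rw [Finset.sum_congr rfl e2, grp k]
        have h2 : ∑ i ∈ Finset.range M', a (N (k + 1) + 1 + i)
            ≤ ((6 * 2 ^ n (k + 2) : ℕ) : ℝ) * q (k + 2) := ih M' (by omega) (k + 1)
        have h3 : ((6 * 2 ^ n (k + 2) : ℕ) : ℝ) * q (k + 2) = 2 * q (k + 1) := by
          rw [hq (k + 1) (by omega)]
          have : (2 : ℝ) ^ n (k + 2) ≠ 0 := by positivity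
          push_cast
          field_simp
          ring
        rw [h3] at h2
        have hp : (1 : ℝ) ≤ 2 ^ n (k + 1) := by exact_mod_cast Nat.one_le_two_pow
        have hc1 : ((5 * 2 ^ n (k + 1) - 1 : ℕ) : ℝ) = 5 * 2 ^ n (k + 1) - 1 := by
          have : 1 ≤ 5 * 2 ^ n (k + 1) := by have h9 := Nat.one_le_two_pow (n := n (k + 1)); omega
          push_cast [Nat.cast_sub this]
          ring
        have hc2 : ((6 * 2 ^ n (k + 1) : ℕ) : ℝ) = 6 * 2 ^ n (k + 1) := by push_cast; ring
        rw [hc1, hc2]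
        nlinarith
  -- summability
  have S0 : Summable (fun i => a (N 0 + 1 + i)) := by
    apply summable_of_sum_range_le (c := ((6 * 2 ^ n 1 : ℕ) : ℝ) * q 1)
    · intro i
      exact (a_pos_all _ (by omega)).le
    · intro M
      exact key M 0
  have Ssum : ∀ m, Summable (fun i => a (m + 1 + i)) := by
    intro m
    have h := (summable_nat_add_iff (f := fun i => a (N 0 + 1 + i)) m).mpr S0
    apply h.congr
    intro i
    congr 1
    rw [hN0]
    omega
  -- splitting the remainder
  have rem_split : ∀ m t, rem a m = ∑ i ∈ Finset.range t, a (m + 1 + i) + rem a (m + t) := by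
    intro m t
    have h := Summable.sum_add_tsum_nat_add (f := fun i => a (m + 1 + i)) t (Ssum m)
    unfold rem
    rw [← h]
    congr 1
    apply tsum_congr
    intro i
    show a (m + 1 + (i + t)) = a (m + t + 1 + i)
    congr 1
    omega
  have rem_nonneg : ∀ m, 0 ≤ rem a m := by
    intro m
    apply tsum_nonneg
    intro i
    exact (a_pos_all _ (by omega)).le
  -- upper bound on remainder at group boundaries
  have R_ub : ∀ k, rem a (N k) ≤ ((6 * 2 ^ n (k + 1) : ℕ) : ℝ) * q (k + 1) := by
    intro k
    exact Summable.tsum_le_of_sum_range_le (Ssum (N k)) (fun M => key M k)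
  -- recursion
  have R_recur : ∀ k, rem a (N k)
      = ((5 * 2 ^ n (k + 1) - 1 : ℕ) : ℝ) * q (k + 1) + rem a (N (k + 1)) := by
    intro k
    rw [rem_split (N k) (n (k + 1) + 2), grp k]
    congr 2
    exact (hN k).symm
  -- strict upper bound
  have R_lt : ∀ k, rem a (N (k + 1)) < 2 * q (k + 1) := by
    intro k
    have h1 := R_recur (k + 1)
    have h2 := R_ub (k + 2)
    have h3 : ((6 * 2 ^ n (k + 3) : ℕ) : ℝ) * q (k + 3) = 2 * q (k + 2) := by
      rw [hq (k + 2) (by omega)]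
      have : (2 : ℝ) ^ n (k + 3) ≠ 0 := by positivity
      push_cast
      field_simp
      ring
    have hp : (2 : ℝ) ≤ 2 ^ n (k + 2) := by
      calc (2 : ℝ) = 2 ^ 1 := by norm_num
      _ ≤ 2 ^ n (k + 2) := by
        apply pow_le_pow_right₀ (by norm_num) (hn (k + 2) (by omega))
    have hc1 : ((5 * 2 ^ n (k + 2) - 1 : ℕ) : ℝ) = 5 * 2 ^ n (k + 2) - 1 := by
      have : 1 ≤ 5 * 2 ^ n (k + 2) := by have h9 := Nat.one_le_two_pow (n := n (k + 2)); omega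
      push_cast [Nat.cast_sub this]
      ring
    have hqe : (3 : ℝ) * 2 ^ n (k + 2) * q (k + 2) = q (k + 1) := hq' (k + 1) (by omega)
    have hq2 : 0 < q (k + 2) := q_pos (k + 2) (by omega)
    rw [h3] at h2
    rw [h1, hc1]
    nlinarith
  -- strict lower bound
  have R_gt : ∀ k, q (k + 1) < rem a (N (k + 1)) := by
    intro k
    have h1 := R_recur (k + 1)
    have hp : (1 : ℝ) ≤ 2 ^ n (k + 2) := by exact_mod_cast Nat.one_le_two_pow
    have hc1 : ((5 * 2 ^ n (k + 2) - 1 : ℕ) : ℝ) = 5 * 2 ^ n (k + 2) - 1 := by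
      have : 1 ≤ 5 * 2 ^ n (k + 2) := by have h9 := Nat.one_le_two_pow (n := n (k + 2)); omega
      push_cast [Nat.cast_sub this]
      ring
    have hqe : (3 : ℝ) * 2 ^ n (k + 2) * q (k + 2) = q (k + 1) := hq' (k + 1) (by omega)
    have hq2 : 0 < q (k + 2) := q_pos (k + 2) (by omega)
    have h4 := rem_nonneg (N (k + 2))
    rw [h1, hc1]
    nlinarith
  -- mid-group remainders
  have rem_mid : ∀ k j, 1 ≤ j → j ≤ n (k + 1) + 2 →
      rem a (N k + j)
        = ((∑ i ∈ Finset.range (n (k + 1) + 2 - j), mmB (n (k + 1)) (j + 1 + i) : ℕ) : ℝ)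
            * q (k + 1) + rem a (N (k + 1)) := by
    intro k j h1 h2
    rw [rem_split (N k + j) (n (k + 1) + 2 - j)]
    congr 1
    · have h : ∀ i ∈ Finset.range (n (k + 1) + 2 - j),
          a (N k + j + 1 + i) = (mmB (n (k + 1)) (j + 1 + i) : ℝ) * q (k + 1) := by
        intro i hi
        simp only [Finset.mem_range] at hi
        have e : N k + j + 1 + i = N k + (j + 1 + i) := by omega
        rw [e]
        exact ha k (j + 1 + i) (by omega) (by omega)
      rw [Finset.sum_congr rfl h, ← Finset.sum_mul, ← Nat.cast_sum]
    · congr 1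
      rw [hN k]
      omega
  -- case j = 1
  have case1 : ∀ k, a (N k + 1) ≤ rem a (N k + 1) := by
    intro k
    have h1 := rem_mid k 1 (by omega) (by omega)
    have e : n (k + 1) + 2 - 1 = n (k + 1) + 1 := by omega
    rw [e] at h1
    have e2 : ∀ i ∈ Finset.range (n (k + 1) + 1),
        mmB (n (k + 1)) (1 + 1 + i) = mmB (n (k + 1)) (2 + i) := by
      intro i _; congr 1
    rw [Finset.sum_congr rfl e2, T1] at h1
    have ha1 : a (N k + 1) = ((2 : ℝ) ^ (n (k + 1) + 1)) * q (k + 1) := by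
      rw [ha k 1 (by omega) (by omega)]
      unfold mmB
      norm_num
    have hp : (1 : ℝ) ≤ 2 ^ n (k + 1) := by exact_mod_cast Nat.one_le_two_pow
    have hc1 : ((3 * 2 ^ n (k + 1) - 1 : ℕ) : ℝ) = 3 * 2 ^ n (k + 1) - 1 := by
      have : 1 ≤ 3 * 2 ^ n (k + 1) := by have h9 := Nat.one_le_two_pow (n := n (k + 1)); omega
      push_cast [Nat.cast_sub this]
      ring
    have hR := R_gt k
    have hq2 : 0 < q (k + 1) := q_pos (k + 1) (by omega)
    rw [ha1, h1, hc1, pow_succ]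
    nlinarith
  -- case j = 2
  have case2 : ∀ k, a (N k + 2) ≤ rem a (N k + 2) := by
    intro k
    have h1 := rem_mid k 2 (by omega) (by omega)
    have e : n (k + 1) + 2 - 2 = n (k + 1) := by omega
    rw [e] at h1
    have e2 : ∀ i ∈ Finset.range (n (k + 1)),
        mmB (n (k + 1)) (2 + 1 + i) = mmB (n (k + 1)) (3 + i) := by
      intro i _; congr 1
    rw [Finset.sum_congr rfl e2, T2] at h1
    have ha1 : a (N k + 2) = ((2 : ℝ) ^ n (k + 1) + 1) * q (k + 1) := by
      rw [ha k 2 (by omega) (by omega)]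
      unfold mmB
      norm_num
    have hp : (2 : ℝ) ≤ 2 ^ n (k + 1) := by
      calc (2 : ℝ) = 2 ^ 1 := by norm_num
      _ ≤ 2 ^ n (k + 1) := by
        apply pow_le_pow_right₀ (by norm_num) (hn (k + 1) (by omega))
    have hc1 : ((2 ^ (n (k + 1) + 1) - 2 : ℕ) : ℝ) = 2 ^ (n (k + 1) + 1) - 2 := by
      have : 2 ≤ 2 ^ (n (k + 1) + 1) := by
        calc 2 = 2 ^ 1 := by norm_num
        _ ≤ 2 ^ (n (k + 1) + 1) := Nat.pow_le_pow_right (by norm_num) (by omega)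
      push_cast [Nat.cast_sub this]
      ring
    have hR := R_gt k
    have hq2 : 0 < q (k + 1) := q_pos (k + 1) (by omega)
    rw [ha1, h1, hc1, pow_succ]
    nlinarith
  -- case 3 ≤ j
  have case3 : ∀ k j, 3 ≤ j → j ≤ n (k + 1) + 2 → rem a (N k + j) < a (N k + j) := by
    intro k j h3 hj
    have h1 := rem_mid k j (by omega) hj
    rw [T3 (n (k + 1)) j h3 hj] at h1
    have ha1 : a (N k + j) = ((2 : ℝ) ^ (n (k + 1) + 3 - j)) * q (k + 1) := by
      rw [ha k j (by omega) hj]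
      unfold mmB
      rw [if_neg (by omega), if_neg (by omega)]
      push_cast
      ring
    have hc1 : ((2 ^ (n (k + 1) + 3 - j) - 2 : ℕ) : ℝ) = 2 ^ (n (k + 1) + 3 - j) - 2 := by
      have : 2 ≤ 2 ^ (n (k + 1) + 3 - j) := by
        calc 2 = 2 ^ 1 := by norm_num
        _ ≤ 2 ^ (n (k + 1) + 3 - j) := Nat.pow_le_pow_right (by norm_num) (by omega)
      push_cast [Nat.cast_sub this]
      ring
    have hR := R_lt k
    have hq2 : 0 < q (k + 1) := q_pos (k + 1) (by omega)
    rw [ha1, h1, hc1]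
    nlinarith
  -- conclusion
  ext i
  simp only [Set.mem_setOf_eq, Set.mem_iUnion, Set.mem_insert_iff, Set.mem_singleton_iff]
  constructor
  · rintro ⟨hi, hle⟩
    obtain ⟨k, j, hj1, hj2, rfl⟩ := decomp i hi
    rcases Nat.lt_or_ge j 3 with h | h
    · interval_cases j
      · exact ⟨k, Or.inl rfl⟩
      · exact ⟨k, Or.inr rfl⟩
    · exact absurd hle (not_le.mpr (case3 k j h hj2))
  · rintro ⟨k, h | h⟩ <;> subst h
    · exact ⟨by omega, case1 k⟩
    · exact ⟨by omega, case2 k⟩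
end

section
/- Let (a_n) be a convergent series of positive non-increasing terms with partial-subsum sets F_n = { ∑_{i∈A} a_i : A ⊆ {1,…,n} } and remainders r_n. If there is an increasing sequence of indices (n_k) and sets D_k ⊆ F_{n_k} such that consecutive elements of D_k differ by at most r_{n_k} and inf_k (max D_k − min D_k) > 0, then E(a_n) contains a nonempty open interval. -/
open Filter Topology

lemma finsetSum_mem_achSet (a : ℕ → ℝ) (A : Finset ℕ) :
    (∑ i ∈ A, a i) ∈ achSet a := by
  classical
  refine ⟨(A : Set ℕ), ?_⟩
  have h0 : ∀ i ∉ A, (A : Set ℕ).indicator a i = 0 := by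
    intro i hi; simp [Set.indicator, hi]
  have h : HasSum ((A : Set ℕ).indicator a) (∑ i ∈ A, (A : Set ℕ).indicator a i) :=
    hasSum_sum_of_ne_finset_zero h0
  have heq : ∑ i ∈ A, (A : Set ℕ).indicator a i = ∑ i ∈ A, a i :=
    Finset.sum_congr rfl (fun i hi => by simp [Set.indicator, hi])
  rwa [heq] at h

lemma achSet_isClosed (a : ℕ → ℝ) (hpos : ∀ i, 0 ≤ a i) (hsum : Summable a) :
    IsClosed (achSet a) := by
  classical
  have hcont : Continuous (fun s : ℕ → Bool => ∑' i, if s i then a i else 0) := by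
    refine continuous_tsum (u := a) ?_ hsum ?_
    · intro i
      exact (continuous_of_discreteTopology
        (f := fun b : Bool => if b then a i else 0)).comp (continuous_apply i)
    · intro i s
      by_cases h : s i <;> simp [h, Real.norm_of_nonneg (hpos i), hpos i]
  have hrange : achSet a = Set.range (fun s : ℕ → Bool => ∑' i, if s i then a i else 0) := by
    ext x
    constructor
    · rintro ⟨A, hA⟩
      refine ⟨fun i => decide (i ∈ A), ?_⟩
      have heq : (fun i => if decide (i ∈ A) then a i else 0) = A.indicator a := by
        funext i; by_cases h : i ∈ A <;> simp [Set.indicator, h]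
      rw [← heq] at hA; exact hA.tsum_eq
    · rintro ⟨s, rfl⟩
      refine ⟨{i | s i = true}, ?_⟩
      have heq : (({i | s i = true} : Set ℕ).indicator a)
          = fun i => if s i then a i else 0 := by
        funext i; by_cases h : s i = true <;> simp [Set.indicator, h]
      rw [heq]
      refine Summable.hasSum ?_
      refine Summable.of_nonneg_of_le (f := a) ?_ ?_ hsum
      · intro i; by_cases h : s i <;> simp [h, hpos i]
      · intro i; by_cases h : s i <;> simp [h, hpos i]
  rw [hrange]
  exact (isCompact_range hcont).isClosed

lemma gap_cover (E : Finset ℝ) (hne : E.Nonempty) (r : ℝ) (hr : 0 ≤ r)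
    (hclose : ∀ x ∈ E, (∃ y ∈ E, x < y) → ∃ y ∈ E, x < y ∧ y ≤ x + r)
    (x : ℝ) (h1 : E.min' hne ≤ x) (h2 : x ≤ E.max' hne) :
    ∃ z ∈ E, |x - z| ≤ r := by
  classical
  set T := E.filter (· ≤ x) with hT
  have hTne : T.Nonempty := ⟨E.min' hne, Finset.mem_filter.2 ⟨E.min'_mem hne, h1⟩⟩
  set d := T.max' hTne with hd
  have hdT : d ∈ T := T.max'_mem hTne
  have hdE : d ∈ E := (Finset.mem_filter.1 hdT).1
  have hdx : d ≤ x := (Finset.mem_filter.1 hdT).2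
  by_cases hcase : x - d ≤ r
  · exact ⟨d, hdE, by rw [abs_of_nonneg (by linarith)]; exact hcase⟩
  · push_neg at hcase
    have hdmax : d < E.max' hne := by
      rcases lt_or_eq_of_le (Finset.le_max' E d hdE) with h | h
      · exact h
      · exfalso; rw [← h] at h2; linarith
    obtain ⟨y, hyE, hy1, hy2⟩ := hclose d hdE ⟨E.max' hne, E.max'_mem hne, hdmax⟩
    have hyx : x < y := by
      by_contra h
      push_neg at h
      have hyT : y ∈ T := Finset.mem_filter.2 ⟨hyE, h⟩
      exact absurd (Finset.le_max' T y hyT) (not_le.2 hy1)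
    exact ⟨y, hyE, by rw [abs_of_nonpos (by linarith)]; linarith⟩

/-- Interval criterion: if along an increasing sequence of indices `n k` there are
sets `D k` of subsums of the first `n k` terms whose consecutive elements differ by
at most `r (n k)` and whose stretch is bounded below by a positive constant, then the
achievement set contains a nonempty open interval. -/
theorem interval_criterion (a : ℕ → ℝ) (hpos : ∀ i, 0 < a i) (hmono : Antitone a)
    (hsum : Summable a) (nk : ℕ → ℕ) (hnk : StrictMono nk)
    (D : ℕ → Finset ℝ) (hne : ∀ k, (D k).Nonempty)
    (hsub : ∀ k, ∀ x ∈ D k, ∃ A ⊆ Finset.range (nk k), x = ∑ i ∈ A, a i)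
    (hclose : ∀ k, ∀ x ∈ D k, (∃ y ∈ D k, x < y) →
      ∃ y ∈ D k, x < y ∧ y ≤ x + rem a (nk k))
    (hstretch : ∃ ε > (0 : ℝ), ∀ k, ε ≤ (D k).max' (hne k) - (D k).min' (hne k)) :
    ∃ x y : ℝ, x < y ∧ Set.Ioo x y ⊆ achSet a := by
  classical
  obtain ⟨ε, hε, hstr⟩ := hstretch
  -- the remainders are nonnegative
  have hremnn : ∀ n, 0 ≤ rem a n := fun n => tsum_nonneg (fun j => (hpos _).le)
  -- each element of D k is in the achievement set
  have hDach : ∀ k, ∀ x ∈ D k, x ∈ achSet a := by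
    intro k x hx
    obtain ⟨A, -, rfl⟩ := hsub k x hx
    exact finsetSum_mem_achSet a A
  -- the minima lie in a compact interval
  have hmem : ∀ k, (D k).min' (hne k) ∈ Set.Icc (0 : ℝ) (∑' i, a i) := by
    intro k
    obtain ⟨A, -, hA⟩ := hsub k _ ((D k).min'_mem (hne k))
    constructor
    · rw [hA]; exact Finset.sum_nonneg (fun i _ => (hpos i).le)
    · rw [hA]; exact Summable.sum_le_tsum A (fun i _ => (hpos i).le) hsum
  obtain ⟨m, -, φ, hφ, hminlim⟩ := isCompact_Icc.tendsto_subseq hmem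
  -- remainders tend to zero along the subsequence
  have hrem0 : Tendsto (fun n => rem a n) atTop (𝓝 0) := by
    have h := tendsto_sum_nat_add a
    have heq : (fun n => rem a n) = (fun i => ∑' k, a (k + i)) ∘ (fun n => n + 1) := by
      funext n
      simp only [rem, Function.comp]
      exact tsum_congr (fun j => by ring_nf)
    rw [heq]
    exact h.comp (tendsto_add_atTop_nat 1)
  have hrem : Tendsto (fun k => rem a (nk (φ k))) atTop (𝓝 0) :=
    hrem0.comp (StrictMono.tendsto_atTop (hnk.comp hφ))
  have hclosed := achSet_isClosed a (fun i => (hpos i).le) hsum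
  refine ⟨m, m + ε, by linarith, ?_⟩
  intro x hx
  obtain ⟨hx1, hx2⟩ := hx
  have hxcl : x ∈ closure (achSet a) := by
    rw [Metric.mem_closure_iff]
    intro δ hδ
    have h1 : ∀ᶠ k in atTop, (D (φ k)).min' (hne (φ k)) < x :=
      Tendsto.eventually_lt_const hx1 hminlim
    have h2 : ∀ᶠ k in atTop, x - ε < (D (φ k)).min' (hne (φ k)) :=
      Tendsto.eventually_const_lt (by linarith) hminlim
    have h3 : ∀ᶠ k in atTop, rem a (nk (φ k)) < δ :=
      hrem.eventually (gt_mem_nhds hδ)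
    obtain ⟨k, hk1, hk2, hk3⟩ := (h1.and (h2.and h3)).exists
    have hxmax : x ≤ (D (φ k)).max' (hne (φ k)) := by
      have := hstr (φ k); linarith
    obtain ⟨z, hzD, hz⟩ := gap_cover (D (φ k)) (hne (φ k)) (rem a (nk (φ k)))
      (hremnn _) (hclose (φ k)) x hk1.le hxmax
    exact ⟨z, hDach _ z hzD, by rw [Real.dist_eq]; linarith⟩
  rwa [hclosed.closure_eq] at hxcl
end

section
/- In the Marchwicki–Miska construction, define C_k := { p q_k : 2^{n_k} ≤ p ≤ 2^{n_k+2} − 1 } and D_1 := C_1, D_{k+1} := D_k + C_{k+1} (Minkowski sum). Then for every k: (α) every element of D_k is a subsum of a_1,…,a_{N_k}; (β) any two consecutive elements of D_k differ by at most q_k; (γ) min D_k = ∑_{i=1}^k 2^{n_i} q_i and max D_k = ∑_{i=1}^k (2^{n_i+2} − 1) q_i. -/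
open Pointwise

/-- binary representation as subset sum -/
lemma binsum : ∀ m, ∀ p < 2 ^ m, ∃ A ⊆ Finset.range m, p = ∑ i ∈ A, 2 ^ i := by
  intro m
  induction m with
  | zero => intro p hp; interval_cases p; exact ⟨∅, by simp, by simp⟩
  | succ m ih =>
    intro p hp
    by_cases h : p < 2 ^ m
    · obtain ⟨A, hA, hs⟩ := ih p h
      exact ⟨A, hA.trans (Finset.range_subset_range.2 (Nat.le_succ m)), hs⟩
    · push_neg at h
      obtain ⟨A, hA, hs⟩ := ih (p - 2 ^ m) (by omega)
      refine ⟨insert m A, ?_, ?_⟩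
      · intro i hi
        rcases Finset.mem_insert.1 hi with rfl | hi
        · exact Finset.self_mem_range_succ i
        · exact (Finset.range_subset_range.2 (Nat.le_succ m)) (hA hi)
      · have hm : m ∉ A := fun hm => by simpa using hA hm
        rw [Finset.sum_insert hm, ← hs]
        omega

/-- every even number `2*s` with `s < 2^(n+1)` is a subsum of the group terms, avoiding index 2 -/
lemma even_subsum (n s : ℕ) (hs : s < 2 ^ (n + 1)) :
    ∃ B ⊆ Finset.Icc 1 (n + 2), 2 ∉ B ∧ 2 * s = ∑ i ∈ B, mmB n i := by
  obtain ⟨A, hA, hsum⟩ := binsum (n + 1) s hs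
  set g : ℕ → ℕ := fun i => if i = n then 1 else n + 2 - i with hg
  have hmem : ∀ i ∈ A, i ≤ n := fun i hi => by
    have := Finset.mem_range.1 (hA hi); omega
  have hval : ∀ i ∈ A, mmB n (g i) = 2 ^ (i + 1) := by
    intro i hi
    by_cases h : i = n
    · simp [hg, h, mmB]
    · have hi' : i < n := lt_of_le_of_ne (hmem i hi) h
      have h3 : 3 ≤ n + 2 - i := by omega
      simp only [hg, if_neg h, mmB]
      rw [if_neg (by omega), if_neg (by omega)]
      congr 1
      omega
  have hginj : ∀ i ∈ A, ∀ j ∈ A, g i = g j → i = j := by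
    intro i hi j hj hij
    have hi' := hmem i hi; have hj' := hmem j hj
    simp only [hg] at hij
    split_ifs at hij with h1 h2 h2 <;> omega
  refine ⟨A.image g, ?_, ?_, ?_⟩
  · intro x hx
    obtain ⟨i, hi, rfl⟩ := Finset.mem_image.1 hx
    have := hmem i hi
    simp only [hg]
    split_ifs <;> simp <;> omega
  · intro hx
    obtain ⟨i, hi, hgi⟩ := Finset.mem_image.1 hx
    have := hmem i hi
    simp only [hg] at hgi
    split_ifs at hgi <;> omega
  · rw [Finset.sum_image hginj]
    rw [Finset.sum_congr rfl hval]
    rw [hsum, Finset.mul_sum]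
    exact Finset.sum_congr rfl fun i _ => by ring

lemma group_subsum (n : ℕ) (hn : 1 ≤ n) (p : ℕ) (h1 : 2 ^ n ≤ p) (h2 : p ≤ 2 ^ (n + 2) - 1) :
    ∃ A ⊆ Finset.Icc 1 (n + 2), p = ∑ i ∈ A, mmB n i := by
  have hpos : (0:ℕ) < 2 ^ n := pow_pos (by norm_num) n
  have hpow : (2:ℕ) ^ (n + 2) = 4 * 2 ^ n := by ring
  rcases Nat.even_or_odd p with ⟨s, hs⟩ | ⟨s, hs⟩
  · have hslt : s < 2 ^ (n + 1) := by omega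
    obtain ⟨B, hB, _, hsum⟩ := even_subsum n s hslt
    exact ⟨B, hB, by omega⟩
  · -- p odd, p ≥ 2^n + 1 since 2^n even
    have hc : 2 ^ n = 2 * 2 ^ (n - 1) := by
      rw [← pow_succ']; congr 1; omega
    have hge : 2 ^ n + 1 ≤ p := by omega
    set r := p - (2 ^ n + 1) with hr
    have hrev : ∃ t, r = 2 * t := by
      refine ⟨(r / 2), ?_⟩
      omega
    obtain ⟨t, ht⟩ := hrev
    have htlt : t < 2 ^ (n + 1) := by omega
    obtain ⟨B, hB, h2B, hsum⟩ := even_subsum n t htlt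
    refine ⟨insert 2 B, ?_, ?_⟩
    · intro x hx
      rcases Finset.mem_insert.1 hx with rfl | hx
      · exact Finset.mem_Icc.2 ⟨by omega, by omega⟩
      · exact hB hx
    · rw [Finset.sum_insert h2B, ← hsum]
      have : mmB n 2 = 2 ^ n + 1 := by simp [mmB]
      omega

/-- Properties (α), (β), (γ) of the sets `D k = C 1 + ⋯ + C k` in the
Marchwicki–Miska construction. -/
theorem mm_Dk_properties (n N : ℕ → ℕ) (q a : ℕ → ℝ)
    (hn : ∀ k, 1 ≤ k → 1 ≤ n k)
    (hN0 : N 0 = 0) (hN : ∀ k, N (k + 1) = N k + (n (k + 1) + 2))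
    (hq1 : q 1 = 1) (hq : ∀ k, 1 ≤ k → q (k + 1) = q k / (3 * 2 ^ n (k + 1)))
    (ha : ∀ k i, 1 ≤ i → i ≤ n (k + 1) + 2 →
      a (N k + i) = (mmB (n (k + 1)) i : ℝ) * q (k + 1))
    (C D : ℕ → Finset ℝ)
    (hC : ∀ k, 1 ≤ k →
      C k = ((Finset.Icc (2 ^ n k) (2 ^ (n k + 2) - 1) : Finset ℕ)).image (fun p : ℕ => (p : ℝ) * q k))
    (hD1 : D 1 = C 1) (hD : ∀ k, 1 ≤ k → D (k + 1) = D k + C (k + 1)) :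
    ∀ k, 1 ≤ k →
      (∀ x ∈ D k, ∃ A ⊆ Finset.Icc 1 (N k), x = ∑ i ∈ A, a i) ∧
      (∀ x ∈ D k, (∃ y ∈ D k, x < y) → ∃ y ∈ D k, x < y ∧ y ≤ x + q k) ∧
      ((∑ i ∈ Finset.Icc 1 k, (2 : ℝ) ^ n i * q i) ∈ D k ∧
        ∀ x ∈ D k, (∑ i ∈ Finset.Icc 1 k, (2 : ℝ) ^ n i * q i) ≤ x) ∧
      ((∑ i ∈ Finset.Icc 1 k, ((2 : ℝ) ^ (n i + 2) - 1) * q i) ∈ D k ∧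
        ∀ x ∈ D k, x ≤ ∑ i ∈ Finset.Icc 1 k, ((2 : ℝ) ^ (n i + 2) - 1) * q i) := by
  -- preliminaries
  have hq_pos : ∀ k, 1 ≤ k → 0 < q k := by
    intro k hk
    induction k, hk using Nat.le_induction with
    | base => rw [hq1]; norm_num
    | succ k hk ih =>
      rw [hq k hk]
      exact div_pos ih (by positivity)
  have hkey : ∀ k, 1 ≤ k → q k = 3 * 2 ^ n (k + 1) * q (k + 1) := by
    intro k hk
    rw [hq k hk]
    field_simp
  have hcast : ∀ m : ℕ, ((2 ^ (m + 2) - 1 : ℕ) : ℝ) = 2 ^ (m + 2) - 1 := by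
    intro m
    have h1 : (1 : ℕ) ≤ 2 ^ (m + 2) := Nat.one_le_two_pow
    push_cast [h1]
    ring
  have hmaxge : ∀ m : ℕ, 2 ^ m ≤ 2 ^ (m + 2) - 1 := by
    intro m
    have h1 : (0 : ℕ) < 2 ^ m := pow_pos (by norm_num) m
    have h2 : (2 : ℕ) ^ (m + 2) = 4 * 2 ^ m := by ring
    omega
  have hCmem : ∀ k, 1 ≤ k → ∀ x, x ∈ C k ↔
      ∃ p : ℕ, (2 ^ n k ≤ p ∧ p ≤ 2 ^ (n k + 2) - 1) ∧ x = (p : ℝ) * q k := by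
    intro k hk x
    rw [hC k hk, Finset.mem_image]
    constructor
    · rintro ⟨p, hp, rfl⟩; exact ⟨p, Finset.mem_Icc.1 hp, rfl⟩
    · rintro ⟨p, hp, rfl⟩; exact ⟨p, Finset.mem_Icc.2 hp, rfl⟩
  -- subsums realizing elements of C (k+1)
  have hsub : ∀ (k : ℕ) (p : ℕ), 2 ^ n (k + 1) ≤ p → p ≤ 2 ^ (n (k + 1) + 2) - 1 →
      ∃ B ⊆ Finset.Icc (N k + 1) (N (k + 1)), (p : ℝ) * q (k + 1) = ∑ i ∈ B, a i := by
    intro k p h1 h2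
    obtain ⟨A, hA, hPsum⟩ := group_subsum (n (k + 1)) (hn (k + 1) (by omega)) p h1 h2
    refine ⟨A.image (fun i => N k + i), ?_, ?_⟩
    · intro x hx
      obtain ⟨i, hi, rfl⟩ := Finset.mem_image.1 hx
      have hI := Finset.mem_Icc.1 (hA hi)
      exact Finset.mem_Icc.2 ⟨by omega, by rw [hN k]; omega⟩
    · rw [Finset.sum_image (by intro i _ j _ h; simp only at h; omega)]
      have hcong : ∀ i ∈ A, a (N k + i) = (mmB (n (k + 1)) i : ℝ) * q (k + 1) := by
        intro i hi
        have hI := Finset.mem_Icc.1 (hA hi)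
        exact ha k i hI.1 hI.2
      rw [Finset.sum_congr rfl hcong, ← Finset.sum_mul, hPsum]
      push_cast
      ring
  intro k hk
  induction k, hk using Nat.le_induction with
  | base =>
    have hq1pos : (0 : ℝ) < q 1 := hq_pos 1 le_rfl
    have hD1mem : ∀ x, x ∈ D 1 ↔
        ∃ p : ℕ, (2 ^ n 1 ≤ p ∧ p ≤ 2 ^ (n 1 + 2) - 1) ∧ x = (p : ℝ) * q 1 := by
      intro x; rw [hD1]; exact hCmem 1 le_rfl x
    refine ⟨?_, ?_, ⟨?_, ?_⟩, ⟨?_, ?_⟩⟩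
    · -- α
      intro x hx
      obtain ⟨p, ⟨hp1, hp2⟩, rfl⟩ := (hD1mem x).1 hx
      obtain ⟨B, hB, hsum⟩ := hsub 0 p hp1 hp2
      rw [hN0, zero_add] at hB
      exact ⟨B, hB, hsum⟩
    · -- β
      intro x hx hex
      obtain ⟨p, ⟨hp1, hp2⟩, rfl⟩ := (hD1mem x).1 hx
      have hplt : p < 2 ^ (n 1 + 2) - 1 := by
        rcases hp2.lt_or_eq with h | h
        · exact h
        · exfalso
          obtain ⟨y, hy, hxy⟩ := hex
          obtain ⟨p'', ⟨_, hp''2⟩, rfl⟩ := (hD1mem y).1 hy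
          have : (p'' : ℝ) ≤ (p : ℝ) := Nat.cast_le.2 (by omega)
          nlinarith
      refine ⟨((p + 1 : ℕ) : ℝ) * q 1, (hD1mem _).2 ⟨p + 1, ⟨by omega, by omega⟩, rfl⟩, ?_, ?_⟩
      · push_cast; nlinarith
      · push_cast; nlinarith
    · -- min mem
      simp only [Finset.Icc_self, Finset.sum_singleton]
      refine (hD1mem _).2 ⟨2 ^ n 1, ⟨le_rfl, hmaxge (n 1)⟩, by push_cast; ring⟩
    · -- min bound
      intro x hx
      simp only [Finset.Icc_self, Finset.sum_singleton]
      obtain ⟨p, ⟨hp1, _⟩, rfl⟩ := (hD1mem x).1 hx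
      have h1 : ((2 : ℝ) ^ n 1) ≤ (p : ℝ) := by exact_mod_cast hp1
      nlinarith
    · -- max mem
      simp only [Finset.Icc_self, Finset.sum_singleton]
      refine (hD1mem _).2 ⟨2 ^ (n 1 + 2) - 1, ⟨hmaxge (n 1), le_rfl⟩, by rw [hcast]⟩
    · -- max bound
      intro x hx
      simp only [Finset.Icc_self, Finset.sum_singleton]
      obtain ⟨p, ⟨_, hp2⟩, rfl⟩ := (hD1mem x).1 hx
      have h1 : (p : ℝ) ≤ (2 : ℝ) ^ (n 1 + 2) - 1 := by
        rw [← hcast (n 1)]; exact_mod_cast hp2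
      nlinarith
  | succ k hk ih =>
    obtain ⟨ihα, ihβ, ⟨ihminmem, ihminle⟩, ⟨ihmaxmem, ihmaxle⟩⟩ := ih
    have hQpos : (0 : ℝ) < q (k + 1) := hq_pos (k + 1) (by omega)
    have hDmem : ∀ x, x ∈ D (k + 1) ↔
        ∃ d ∈ D k, ∃ p : ℕ, (2 ^ n (k + 1) ≤ p ∧ p ≤ 2 ^ (n (k + 1) + 2) - 1) ∧
          x = d + (p : ℝ) * q (k + 1) := by
      intro x
      rw [hD k hk, Finset.mem_add]
      constructor
      · rintro ⟨d, hd, c, hc, rfl⟩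
        obtain ⟨p, hp, rfl⟩ := (hCmem (k + 1) (by omega) c).1 hc
        exact ⟨d, hd, p, hp, rfl⟩
      · rintro ⟨d, hd, p, hp, rfl⟩
        exact ⟨d, hd, _, (hCmem (k + 1) (by omega) _).2 ⟨p, hp, rfl⟩, rfl⟩
    have hNle : N k ≤ N (k + 1) := by rw [hN]; omega
    have hp2pos : (0 : ℕ) < 2 ^ n (k + 1) := pow_pos (by norm_num) _
    have h4 : ((2 : ℝ) ^ (n (k + 1) + 2)) = 4 * 2 ^ n (k + 1) := by ring
    refine ⟨?_, ?_, ⟨?_, ?_⟩, ⟨?_, ?_⟩⟩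
    · -- α
      intro x hx
      obtain ⟨d, hd, p, ⟨hp1, hp2⟩, rfl⟩ := (hDmem x).1 hx
      obtain ⟨A, hA, hdsum⟩ := ihα d hd
      obtain ⟨B, hB, hcsum⟩ := hsub k p hp1 hp2
      have hdisj : Disjoint A B := by
        rw [Finset.disjoint_left]
        intro i hiA hiB
        have h1 := Finset.mem_Icc.1 (hA hiA)
        have h2 := Finset.mem_Icc.1 (hB hiB)
        omega
      refine ⟨A ∪ B, ?_, ?_⟩
      · intro i hi
        rcases Finset.mem_union.1 hi with h | h
        · have := Finset.mem_Icc.1 (hA h); exact Finset.mem_Icc.2 ⟨this.1, this.2.trans hNle⟩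
        · have := Finset.mem_Icc.1 (hB h); exact Finset.mem_Icc.2 ⟨by omega, this.2⟩
      · rw [Finset.sum_union hdisj, ← hdsum, ← hcsum]
    · -- β
      intro x hx hex
      obtain ⟨d, hd, p, ⟨hp1, hp2⟩, rfl⟩ := (hDmem x).1 hx
      by_cases hplt : p < 2 ^ (n (k + 1) + 2) - 1
      · refine ⟨d + ((p + 1 : ℕ) : ℝ) * q (k + 1),
          (hDmem _).2 ⟨d, hd, p + 1, ⟨by omega, by omega⟩, rfl⟩, ?_, ?_⟩
        · push_cast; nlinarith
        · push_cast; nlinarith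
      · have hpe : p = 2 ^ (n (k + 1) + 2) - 1 := by omega
        obtain ⟨y, hy, hxy⟩ := hex
        obtain ⟨e, he, p'', ⟨_, hp''2⟩, rfl⟩ := (hDmem y).1 hy
        have hde : d < e := by
          have h1 : (p'' : ℝ) ≤ (p : ℝ) := Nat.cast_le.2 (by omega)
          nlinarith
        obtain ⟨d', hd', hdd', hd'le⟩ := ihβ d hd ⟨e, he, hde⟩
        set S := (Finset.Icc (2 ^ n (k + 1)) (2 ^ (n (k + 1) + 2) - 1)).filter
          (fun m : ℕ => d + (p : ℝ) * q (k + 1) < d' + (m : ℝ) * q (k + 1)) with hS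
        have hSne : S.Nonempty :=
          ⟨p, Finset.mem_filter.2 ⟨Finset.mem_Icc.2 ⟨hp1, hp2⟩, by linarith⟩⟩
        set p' := S.min' hSne with hp'
        have hp'S : p' ∈ S := S.min'_mem hSne
        obtain ⟨hp'Icc, hp'gt⟩ := Finset.mem_filter.1 hp'S
        obtain ⟨hp'1, hp'2⟩ := Finset.mem_Icc.1 hp'Icc
        refine ⟨d' + (p' : ℝ) * q (k + 1),
          (hDmem _).2 ⟨d', hd', p', ⟨hp'1, hp'2⟩, rfl⟩, hp'gt, ?_⟩
        have hpc : (p : ℝ) = 2 ^ (n (k + 1) + 2) - 1 := by rw [hpe, hcast]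
        rcases hp'1.lt_or_eq with h1' | h1'
        · -- p' > 2^n : use minimality at p' - 1
          have hnm : p' - 1 ∉ S := by
            intro hmem
            have h := S.min'_le (p' - 1) hmem
            rw [← hp'] at h
            omega
          have hIcc : p' - 1 ∈ Finset.Icc (2 ^ n (k + 1)) (2 ^ (n (k + 1) + 2) - 1) :=
            Finset.mem_Icc.2 ⟨by omega, by omega⟩
          have hle : d' + ((p' - 1 : ℕ) : ℝ) * q (k + 1) ≤ d + (p : ℝ) * q (k + 1) := by
            by_contra hcon
            push_neg at hcon
            exact hnm (Finset.mem_filter.2 ⟨hIcc, hcon⟩)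
          have hc1 : ((p' - 1 : ℕ) : ℝ) = (p' : ℝ) - 1 := by
            have : 1 ≤ p' := by
              have := pow_pos (show 0 < 2 by norm_num) (n (k + 1)); omega
            push_cast [this]; ring
          rw [hc1] at hle
          nlinarith
        · -- p' = 2^n : use d' ≤ d + q k
          have hqk := hkey k hk
          have hc2 : ((p' : ℕ) : ℝ) = 2 ^ n (k + 1) := by
            rw [← h1']; push_cast; ring
          rw [hc2, hpc]
          rw [hqk] at hd'le
          nlinarith
    · -- min mem
      rw [Finset.sum_Icc_succ_top (by omega : 1 ≤ k + 1)]
      exact (hDmem _).2 ⟨_, ihminmem, 2 ^ n (k + 1), ⟨le_rfl, hmaxge _⟩, by push_cast; ring⟩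
    · -- min bound
      intro x hx
      rw [Finset.sum_Icc_succ_top (by omega : 1 ≤ k + 1)]
      obtain ⟨d, hd, p, ⟨hp1, _⟩, rfl⟩ := (hDmem x).1 hx
      have h1 : ((2 : ℝ) ^ n (k + 1)) ≤ (p : ℝ) := by exact_mod_cast hp1
      have h2 := ihminle d hd
      nlinarith
    · -- max mem
      rw [Finset.sum_Icc_succ_top (by omega : 1 ≤ k + 1)]
      exact (hDmem _).2 ⟨_, ihmaxmem, 2 ^ (n (k + 1) + 2) - 1, ⟨hmaxge _, le_rfl⟩,
        by rw [hcast]⟩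
    · -- max bound
      intro x hx
      rw [Finset.sum_Icc_succ_top (by omega : 1 ≤ k + 1)]
      obtain ⟨d, hd, p, ⟨_, hp2⟩, rfl⟩ := (hDmem x).1 hx
      have h1 : (p : ℝ) ≤ (2 : ℝ) ^ (n (k + 1) + 2) - 1 := by
        rw [← hcast (n (k + 1))]; exact_mod_cast hp2
      have h2 := ihmaxle d hd
      nlinarith
end

section
/- Let (n_k), (q_k), (N_k), (a_i) be as in the Marchwicki–Miska construction. Then for every k, Δ_{r_{N_k}} F_{N_k} ≥ ∑_{i=1}^k (3·2^{n_i} − 1) q_i, and consequently lim_{k→∞} Δ_{r_{N_k}} F_{N_k} ≥ 3·2^{n_1} − 1 > 0; hence E(a_i) contains an interval. -/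
/-- The finite set of subsums of the terms `a 1, …, a N`. -/
noncomputable def Fset (a : ℕ → ℝ) (N : ℕ) : Finset ℝ :=
  (Finset.Icc 1 N).powerset.image (fun A => ∑ i ∈ A, a i)

/-- A finite set `C ⊆ ℝ` is `ε`-close if any two consecutive elements differ
by at most `ε`. -/
def IsEpsClose (ε : ℝ) (C : Finset ℝ) : Prop :=
  ∀ x ∈ C, ∀ y ∈ C, x < y → (∀ z ∈ C, ¬(x < z ∧ z < y)) → y - x ≤ ε

/-- `Δ_ε B`: the largest stretch of an (maximal) `ε`-close subset of `B`. -/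
noncomputable def deltaEps (ε : ℝ) (B : Finset ℝ) : ℝ :=
  sSup {s | ∃ (C : Finset ℝ) (hC : C.Nonempty),
    C ⊆ B ∧ IsEpsClose ε C ∧ s = C.max' hC - C.min' hC}

noncomputable def mmLt (n : ℕ → ℕ) (q : ℕ → ℝ) (k : ℕ) : ℝ :=
  ∑' j : ℕ, (2 ^ n (k + 1 + j) : ℝ) * q (k + 1 + j)

lemma mm_binrep (n : ℕ) : ∀ m, m < 2^n → ∃ S : Finset ℕ, S ⊆ Finset.range n ∧ ∑ e ∈ S, 2^e = m := by
  induction n with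
  | zero => intro m hm; exact ⟨∅, by simp, by simpa using by omega⟩
  | succ n ih =>
    intro m hm
    by_cases h : m < 2^n
    · obtain ⟨S, hS, hsum⟩ := ih m h
      exact ⟨S, hS.trans (Finset.range_subset_range.2 (by omega)), hsum⟩
    · have h2 : 2^(n+1) = 2*2^n := by ring
      obtain ⟨S, hS, hsum⟩ := ih (m - 2^n) (by omega)
      have hn : n ∉ S := fun hc => by simpa using hS hc
      refine ⟨insert n S, ?_, ?_⟩
      · intro x hx
        rcases Finset.mem_insert.1 hx with rfl | hx
        · exact Finset.mem_range.2 (by omega)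
        · exact Finset.range_subset_range.2 (by omega) (hS hx)
      · rw [Finset.sum_insert hn, hsum]; omega

lemma mm_even_rep (n : ℕ) (hn : 1 ≤ n) (m : ℕ) (hm : m < 2^n) :
    ∃ S : Finset ℕ, S ⊆ Finset.Icc 3 (n+2) ∧ ∑ j ∈ S, mmB n j = 2*m := by
  obtain ⟨S, hS, hsum⟩ := mm_binrep n m hm
  have hmem : ∀ e ∈ S, e < n := fun e he => Finset.mem_range.1 (hS he)
  refine ⟨S.image (fun e => n + 2 - e), ?_, ?_⟩
  · intro x hx
    obtain ⟨e, he, rfl⟩ := Finset.mem_image.1 hx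
    have := hmem e he
    exact Finset.mem_Icc.2 (by omega)
  · rw [Finset.sum_image (fun x hx y hy hxy => by
      have := hmem x hx; have := hmem y hy; omega)]
    have : ∀ e ∈ S, mmB n (n + 2 - e) = 2 * 2^e := by
      intro e he
      have he' := hmem e he
      have h1 : n + 2 - e ≠ 1 := by omega
      have h2 : n + 2 - e ≠ 2 := by omega
      have h3 : n + 3 - (n + 2 - e) = e + 1 := by omega
      simp [mmB, h1, h2, h3, pow_succ, mul_comm]
    rw [Finset.sum_congr rfl this, ← Finset.mul_sum, hsum]

lemma mmB_rep (n : ℕ) (hn : 1 ≤ n) (c : ℕ) (h1 : 2^n ≤ c) (h2 : c < 2^(n+2)) :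
    ∃ S, S ⊆ Finset.Icc 1 (n+2) ∧ ∑ j ∈ S, mmB n j = c := by
  have hP2 : 2^(n+1) = 2*2^n := by ring
  have hP4 : 2^(n+2) = 4*2^n := by ring
  have hR : 2^n = 2*2^(n-1) := by
    conv_lhs => rw [show n = (n-1)+1 by omega]
    ring
  have hRpos : 0 < 2^(n-1) := Nat.pow_pos (by omega)
  have hRle : 2^(n-1) ≤ 2^n := by omega
  have m1 : mmB n 1 = 2^(n+1) := by simp [mmB]
  have m2 : mmB n 2 = 2^n + 1 := by simp [mmB]
  rcases Nat.even_or_odd c with ⟨m, hm⟩ | ⟨m, hm⟩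
  · by_cases hc : c < 2^(n+1)
    · obtain ⟨S, hS, hsum⟩ := mm_even_rep n hn m (by omega)
      exact ⟨S, hS.trans (Finset.Icc_subset_Icc_left (by omega)), by omega⟩
    · obtain ⟨S, hS, hsum⟩ := mm_even_rep n hn (m - 2^n) (by omega)
      have h1n : (1:ℕ) ∉ S := fun hc' => by have := Finset.mem_Icc.1 (hS hc'); omega
      refine ⟨insert 1 S, ?_, ?_⟩
      · intro x hx
        rcases Finset.mem_insert.1 hx with rfl | hx
        · exact Finset.mem_Icc.2 (by omega)
        · exact (Finset.Icc_subset_Icc_left (by omega)) (hS hx)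
      · rw [Finset.sum_insert h1n, hsum, m1]; omega
  · -- c = 2*m+1
    by_cases hc : m - 2^(n-1) < 2^n
    · obtain ⟨S, hS, hsum⟩ := mm_even_rep n hn (m - 2^(n-1)) hc
      have h2n : (2:ℕ) ∉ S := fun hc' => by have := Finset.mem_Icc.1 (hS hc'); omega
      refine ⟨insert 2 S, ?_, ?_⟩
      · intro x hx
        rcases Finset.mem_insert.1 hx with rfl | hx
        · exact Finset.mem_Icc.2 (by omega)
        · exact (Finset.Icc_subset_Icc_left (by omega)) (hS hx)
      · rw [Finset.sum_insert h2n, hsum, m2]; omega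
    · obtain ⟨S, hS, hsum⟩ := mm_even_rep n hn (m - 2^(n-1) - 2^n) (by omega)
      have h2n : (2:ℕ) ∉ S := fun hc' => by have := Finset.mem_Icc.1 (hS hc'); omega
      have h1n : (1:ℕ) ∉ insert 2 S := by
        simp only [Finset.mem_insert]
        rintro (h | h)
        · omega
        · have := Finset.mem_Icc.1 (hS h); omega
      refine ⟨insert 1 (insert 2 S), ?_, ?_⟩
      · intro x hx
        rcases Finset.mem_insert.1 hx with rfl | hx
        · exact Finset.mem_Icc.2 (by omega)
        rcases Finset.mem_insert.1 hx with rfl | hx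
        · exact Finset.mem_Icc.2 (by omega)
        · exact (Finset.Icc_subset_Icc_left (by omega)) (hS hx)
      · rw [Finset.sum_insert h1n, Finset.sum_insert h2n, hsum, m1, m2]; omega

lemma mm_pow_sum (n : ℕ) : ∑ e ∈ Finset.Icc 1 n, 2^e = 2^(n+1) - 2 := by
  induction n with
  | zero => simp
  | succ n ih =>
    rw [show n+1 = n+1 from rfl, Finset.sum_Icc_succ_top (by omega), ih]
    have : 2^(n+1+1) = 2*2^(n+1) := by ring
    have : 2^(n+1) = 2*2^n := by ring
    have h1 : (1:ℕ) ≤ 2^n := Nat.one_le_two_pow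
    omega

lemma mmB_sum (n : ℕ) (hn : 1 ≤ n) : ∑ j ∈ Finset.Icc 1 (n+2), mmB n j = 5*2^n - 1 := by
  have hsplit : Finset.Icc 1 (n+2) = insert 1 (insert 2 (Finset.Icc 3 (n+2))) := by
    ext x; simp [Finset.mem_Icc, Finset.mem_insert]; omega
  have h1 : (1:ℕ) ∉ insert 2 (Finset.Icc 3 (n+2)) := by simp
  have h2 : (2:ℕ) ∉ Finset.Icc 3 (n+2) := by simp
  have htail : ∑ j ∈ Finset.Icc 3 (n+2), mmB n j = ∑ e ∈ Finset.Icc 1 n, 2^e := by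
    refine Finset.sum_nbij' (fun j => n + 3 - j) (fun e => n + 3 - e) ?_ ?_ ?_ ?_ ?_
    · intro j hj; have := Finset.mem_Icc.1 hj; exact Finset.mem_Icc.2 (by omega)
    · intro e he; have := Finset.mem_Icc.1 he; exact Finset.mem_Icc.2 (by omega)
    · intro j hj; have := Finset.mem_Icc.1 hj; omega
    · intro e he; have := Finset.mem_Icc.1 he; omega
    · intro j hj
      have hj' := Finset.mem_Icc.1 hj
      have e1 : j ≠ 1 := by omega
      have e2 : j ≠ 2 := by omega
      simp [mmB, e1, e2]
  rw [hsplit, Finset.sum_insert h1, Finset.sum_insert h2, htail, mm_pow_sum]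
  have m1 : mmB n 1 = 2^(n+1) := by simp [mmB]
  have m2 : mmB n 2 = 2^n + 1 := by simp [mmB]
  have : 2^(n+1) = 2*2^n := by ring
  have h1 : (1:ℕ) ≤ 2^n := Nat.one_le_two_pow
  omega

section MM
variable {n N : ℕ → ℕ} {q a : ℕ → ℝ}

lemma mm_q_pos (hq1 : q 1 = 1) (hq : ∀ k, 1 ≤ k → q (k + 1) = q k / (3 * 2 ^ n (k + 1))) :
    ∀ k, 1 ≤ k → 0 < q k := by
  intro k hk
  induction k, hk using Nat.le_induction with
  | base => rw [hq1]; norm_num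
  | succ k hk ih =>
    rw [hq k hk]
    exact div_pos ih (by positivity)

lemma mm_qq (hq1 : q 1 = 1) (hq : ∀ k, 1 ≤ k → q (k + 1) = q k / (3 * 2 ^ n (k + 1))) :
    ∀ k, 1 ≤ k → 3 * 2 ^ n (k + 1) * q (k + 1) = q k := by
  intro k hk
  rw [hq k hk]
  field_simp

lemma mm_q_decay (hn : ∀ k, 1 ≤ k → 1 ≤ n k) (hq1 : q 1 = 1)
    (hq : ∀ k, 1 ≤ k → q (k + 1) = q k / (3 * 2 ^ n (k + 1))) :
    ∀ k, 1 ≤ k → ∀ j, q (k + j) ≤ q k * (1/6) ^ j := by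
  intro k hk j
  induction j with
  | zero => simp
  | succ j ih =>
    have hkj : 1 ≤ k + j := by omega
    have hpos := mm_q_pos hq1 hq (k + j) hkj
    have h6 : (6:ℝ) ≤ 3 * 2 ^ n (k + j + 1) := by
      have h1 : 1 ≤ n (k + j + 1) := hn _ (by omega)
      have : (2:ℝ) ≤ 2 ^ n (k + j + 1) := by
        calc (2:ℝ) = 2^1 := by norm_num
        _ ≤ 2 ^ n (k + j + 1) := by
          apply pow_le_pow_right₀ (by norm_num) h1
      linarith
    have : q (k + (j+1)) = q (k + j) / (3 * 2 ^ n (k + j + 1)) := by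
      rw [show k + (j+1) = (k+j) + 1 by omega]; exact hq _ hkj
    rw [this]
    have h1 : q (k + j) / (3 * 2 ^ n (k + j + 1)) ≤ q (k + j) / 6 := by
      apply div_le_div_of_nonneg_left (le_of_lt hpos) (by norm_num) h6
    calc q (k+j) / (3 * 2 ^ n (k+j+1)) ≤ q (k+j) / 6 := h1
      _ ≤ (q k * (1/6)^j) / 6 := by linarith
      _ = q k * (1/6)^(j+1) := by ring

lemma mm_N_ge (hn : ∀ k, 1 ≤ k → 1 ≤ n k) (hN : ∀ k, N (k + 1) = N k + (n (k + 1) + 2)) :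
    ∀ k, k ≤ N k := by
  intro k
  induction k with
  | zero => omega
  | succ k ih => have := hN k; omega

lemma mm_N_mono (hN : ∀ k, N (k + 1) = N k + (n (k + 1) + 2)) :
    ∀ k m, k ≤ m → N k ≤ N m := by
  intro k m hkm
  induction m with
  | zero => have : k = 0 := by omega
            subst this; exact le_refl _
  | succ m ih =>
    have := hN m
    rcases Nat.eq_or_lt_of_le hkm with h | h
    · subst h; exact le_refl _
    · have := ih (by omega); omega

lemma mm_group (hN0 : N 0 = 0) (hN : ∀ k, N (k + 1) = N k + (n (k + 1) + 2))
    (hn : ∀ k, 1 ≤ k → 1 ≤ n k) :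
    ∀ m, 1 ≤ m → ∃ k i, 1 ≤ i ∧ i ≤ n (k + 1) + 2 ∧ m = N k + i := by
  intro m hm
  have hP : ∃ k, m ≤ N k := ⟨m, mm_N_ge hn hN m⟩
  classical
  have hk0 : m ≤ N (Nat.find hP) := Nat.find_spec hP
  have hk0pos : Nat.find hP ≠ 0 := by
    intro h; rw [h, hN0] at hk0; omega
  obtain ⟨k, hk⟩ : ∃ k, Nat.find hP = k + 1 := ⟨Nat.find hP - 1, by omega⟩
  have hlt : N k < m := by
    by_contra h
    push_neg at h
    exact absurd h (Nat.find_min hP (by omega))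
  rw [hk] at hk0
  have := hN k
  exact ⟨k, m - N k, by omega, by omega, by omega⟩

lemma mm_a_nonneg (hN0 : N 0 = 0) (hN : ∀ k, N (k + 1) = N k + (n (k + 1) + 2))
    (hn : ∀ k, 1 ≤ k → 1 ≤ n k) (hq1 : q 1 = 1)
    (hq : ∀ k, 1 ≤ k → q (k + 1) = q k / (3 * 2 ^ n (k + 1)))
    (ha : ∀ k i, 1 ≤ i → i ≤ n (k + 1) + 2 →
      a (N k + i) = (mmB (n (k + 1)) i : ℝ) * q (k + 1)) :
    ∀ m, 1 ≤ m → 0 ≤ a m := by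
  intro m hm
  obtain ⟨k, i, hi1, hi2, rfl⟩ := mm_group hN0 hN hn m hm
  rw [ha k i hi1 hi2]
  have := mm_q_pos hq1 hq (k+1) (by omega)
  positivity

lemma mm_Ioc_sum (f : ℕ → ℝ) (c d : ℕ) :
    ∑ m ∈ Finset.Ioc c (c + d), f m = ∑ j ∈ Finset.Icc 1 d, f (c + j) := by
  refine Finset.sum_nbij' (fun m => m - c) (fun j => c + j) ?_ ?_ ?_ ?_ ?_
  · intro m hm; have := Finset.mem_Ioc.1 hm; exact Finset.mem_Icc.2 (by omega)
  · intro j hj; have := Finset.mem_Icc.1 hj; exact Finset.mem_Ioc.2 (by omega)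
  · intro m hm; have := Finset.mem_Ioc.1 hm; omega
  · intro j hj; have := Finset.mem_Icc.1 hj; omega
  · intro m hm; have := Finset.mem_Ioc.1 hm; congr 1; omega

lemma mm_group_sum (hn : ∀ k, 1 ≤ k → 1 ≤ n k)
    (ha : ∀ k i, 1 ≤ i → i ≤ n (k + 1) + 2 →
      a (N k + i) = (mmB (n (k + 1)) i : ℝ) * q (k + 1)) (k : ℕ) :
    ∑ j ∈ Finset.Icc 1 (n (k + 1) + 2), a (N k + j) = (5 * 2 ^ n (k + 1) - 1 : ℝ) * q (k + 1) := by
  have h1 : ∀ j ∈ Finset.Icc 1 (n (k+1) + 2), a (N k + j) = (mmB (n (k+1)) j : ℝ) * q (k+1) := by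
    intro j hj
    have := Finset.mem_Icc.1 hj
    exact ha k j (by omega) (by omega)
  rw [Finset.sum_congr rfl h1, ← Finset.sum_mul, ← Nat.cast_sum]
  rw [mmB_sum _ (hn (k+1) (by omega))]
  have h2 : (1:ℕ) ≤ 5 * 2 ^ n (k+1) := by
    have := Nat.one_le_two_pow (n := n (k+1)); omega
  push_cast [h2]
  ring_nf

lemma mm_Icc_range (f : ℕ → ℝ) (c d : ℕ) :
    ∑ j ∈ Finset.Icc 1 d, f (c + j) = ∑ j ∈ Finset.range d, f (c + 1 + j) := by
  refine Finset.sum_nbij' (fun j => j - 1) (fun i => i + 1) ?_ ?_ ?_ ?_ ?_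
  · intro j hj; have := Finset.mem_Icc.1 hj; exact Finset.mem_range.2 (by omega)
  · intro i hi; have := Finset.mem_range.1 hi; exact Finset.mem_Icc.2 (by omega)
  · intro j hj; have := Finset.mem_Icc.1 hj; omega
  · intro i hi; omega
  · intro j hj; have := Finset.mem_Icc.1 hj; congr 1; omega

lemma mm_Fset_zero (a : ℕ → ℝ) (M : ℕ) : (0:ℝ) ∈ Fset a M :=
  Finset.mem_image.2 ⟨∅, Finset.mem_powerset.2 (Finset.empty_subset _), by simp⟩

lemma mm_Fset_mem (a : ℕ → ℝ) (M : ℕ) (A : Finset ℕ) (hA : A ⊆ Finset.Icc 1 M) :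
    (∑ i ∈ A, a i) ∈ Fset a M :=
  Finset.mem_image.2 ⟨A, Finset.mem_powerset.2 hA, rfl⟩

lemma mm_deltaEps_ge (B : Finset ℝ) (hB : B.Nonempty) (ε : ℝ) (C : Finset ℝ)
    (hC : C.Nonempty) (hsub : C ⊆ B) (hclose : IsEpsClose ε C) :
    C.max' hC - C.min' hC ≤ deltaEps ε B := by
  apply le_csSup
  · refine ⟨B.max' hB - B.min' hB, ?_⟩
    rintro s ⟨C', hC', hsub', _, rfl⟩
    have h1 := Finset.max'_subset hC' hsub'
    have h2 := Finset.min'_subset hC' hsub'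
    have h3 : B.max' ⟨C'.max' hC', hsub' (C'.max'_mem hC')⟩ = B.max' hB := rfl
    linarith [Finset.max'_subset hC' hsub', Finset.min'_subset hC' hsub']
  · exact ⟨C, hC, hsub, hclose, rfl⟩

variable (hn : ∀ k, 1 ≤ k → 1 ≤ n k)
    (hN0 : N 0 = 0) (hN : ∀ k, N (k + 1) = N k + (n (k + 1) + 2))
    (hq1 : q 1 = 1) (hq : ∀ k, 1 ≤ k → q (k + 1) = q k / (3 * 2 ^ n (k + 1)))
    (ha : ∀ k i, 1 ≤ i → i ≤ n (k + 1) + 2 →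
      a (N k + i) = (mmB (n (k + 1)) i : ℝ) * q (k + 1))
include hn hN0 hN hq1 hq ha

lemma mm_sum_Icc : ∀ k, ∑ m ∈ Finset.Icc 1 (N k), a m
    = ∑ i ∈ Finset.Icc 1 k, (5 * 2 ^ n i - 1 : ℝ) * q i := by
  intro k
  induction k with
  | zero => rw [hN0]; simp
  | succ k ih =>
    have hsplit : Finset.Icc 1 (N (k+1)) = Finset.Ioc 0 (N (k+1)) := by
      rw [← Finset.Icc_add_one_left_eq_Ioc]; rfl
    have hsplit2 : Finset.Icc 1 (N k) = Finset.Ioc 0 (N k) := by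
      rw [← Finset.Icc_add_one_left_eq_Ioc]; rfl
    rw [hsplit, ← Finset.sum_Ioc_consecutive _ (Nat.zero_le (N k))
        (mm_N_mono hN k (k+1) (by omega)), ← hsplit2, ih]
    rw [show N (k+1) = N k + (n (k+1) + 2) from hN k, mm_Ioc_sum,
      mm_group_sum hn ha k, Finset.sum_Icc_succ_top (by omega)]

lemma mm_sum_bound : ∀ k, 1 ≤ k →
    (∑ i ∈ Finset.Icc 1 k, (5 * 2 ^ n i - 1 : ℝ) * q i) + 2 * q k ≤ 5 * 2 ^ n 1 + 2 := by
  intro k hk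
  induction k, hk using Nat.le_induction with
  | base =>
    simp only [Finset.Icc_self, Finset.sum_singleton, hq1]
    norm_num
  | succ k hk ih =>
    rw [Finset.sum_Icc_succ_top (by omega)]
    have hqq := mm_qq hq1 hq k hk
    have hp := mm_q_pos hq1 hq (k+1) (by omega)
    have h2 : (1:ℝ) ≤ 2 ^ n (k+1) := one_le_pow₀ (by norm_num)
    nlinarith

lemma mm_summable : Summable (fun m => a (m + 1)) := by
  have hnn := mm_a_nonneg hN0 hN hn hq1 hq ha
  apply summable_of_sum_range_le (c := 5 * 2 ^ n 1 + 2) (fun m => hnn (m+1) (by omega))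
  intro M
  have e1 : ∑ i ∈ Finset.range M, a (i + 1) = ∑ m ∈ Finset.Icc 1 M, a m := by
    rw [show (∑ m ∈ Finset.Icc 1 M, a m) = ∑ j ∈ Finset.Icc 1 M, a (0 + j) from
      Finset.sum_congr rfl (fun j _ => by rw [Nat.zero_add]), mm_Icc_range a 0 M]
    exact Finset.sum_congr rfl (fun i _ => by congr 1; omega)
  rw [e1]
  have e2 : ∑ m ∈ Finset.Icc 1 M, a m ≤ ∑ m ∈ Finset.Icc 1 (N M), a m := by
    apply Finset.sum_le_sum_of_subset_of_nonneg
    · exact Finset.Icc_subset_Icc_right (mm_N_ge hn hN M)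
    · intro m hm _; exact hnn m (Finset.mem_Icc.1 hm).1
  rcases Nat.eq_zero_or_pos M with rfl | hM
  · rw [e1.symm]; simp; positivity
  · have := mm_sum_bound hn hN0 hN hq1 hq ha M hM
    have := mm_q_pos hq1 hq M hM
    rw [mm_sum_Icc hn hN0 hN hq1 hq ha M] at e2
    linarith

lemma mm_tail_summable : ∀ K, Summable (fun j => a (K + 1 + j)) := by
  intro K
  have h := (summable_nat_add_iff (f := fun m => a (m+1)) K).2
    (mm_summable hn hN0 hN hq1 hq ha)
  apply h.congr
  intro j
  congr 1
  omega

lemma mm_rem_gt : ∀ k, 1 ≤ k → q k < rem a (N k) := by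
  intro k hk
  have hnn := mm_a_nonneg hN0 hN hn hq1 hq ha
  have hsum := mm_tail_summable hn hN0 hN hq1 hq ha (N k)
  have h1 : ∑ j ∈ Finset.range (n (k+1) + 2), a (N k + 1 + j) ≤ rem a (N k) := by
    apply Summable.sum_le_tsum _ (fun j _ => hnn _ (by omega)) hsum
  have h2 : ∑ j ∈ Finset.range (n (k+1) + 2), a (N k + 1 + j)
      = ∑ j ∈ Finset.Icc 1 (n (k+1) + 2), a (N k + j) := by
    rw [mm_Icc_range a (N k) (n (k+1) + 2)]
  rw [h2, mm_group_sum hn ha k] at h1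
  have hqq := mm_qq hq1 hq k hk
  have hp := mm_q_pos hq1 hq (k+1) (by omega)
  have h3 : (1:ℝ) ≤ 2 ^ n (k+1) := one_le_pow₀ (by norm_num)
  nlinarith

lemma mm_Dmem : ∀ k, 1 ≤ k → ∀ t : ℕ, t < ∏ i ∈ Finset.Icc 1 k, 3 * 2 ^ n i →
    ((∑ i ∈ Finset.Icc 1 k, (2 ^ n i : ℝ) * q i) + t * q k) ∈ Fset a (N k) := by
  intro k hk
  induction k, hk using Nat.le_induction with
  | base =>
    intro t ht
    simp only [Finset.Icc_self, Finset.prod_singleton, Finset.sum_singleton] at ht ⊢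
    have hn1 : 1 ≤ n 1 := hn 1 le_rfl
    obtain ⟨S, hS, hsum⟩ := mmB_rep (n 1) hn1 (2 ^ n 1 + t) (by omega)
      (by have : 2^(n 1 + 2) = 4 * 2^(n 1) := by ring
          omega)
    have hN1 : N 1 = n 1 + 2 := by
      have := hN 0; simp only [Nat.zero_add] at this; omega
    have heq : ∀ j ∈ S, a j = (mmB (n 1) j : ℝ) * q 1 := by
      intro j hj
      have hj' := Finset.mem_Icc.1 (hS hj)
      have := ha 0 j (by omega) (by simp only [Nat.zero_add]; omega)
      simp only [Nat.zero_add, hN0] at this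
      exact this
    have : (∑ j ∈ S, a j) ∈ Fset a (N 1) := mm_Fset_mem a (N 1) S (by rw [hN1]; exact hS)
    have hval : ∑ j ∈ S, a j = 2 ^ n 1 * q 1 + t * q 1 := by
      rw [Finset.sum_congr rfl heq, ← Finset.sum_mul, ← Nat.cast_sum, hsum]
      push_cast
      ring
    rwa [hval] at this
  | succ k hk ih =>
    intro t ht
    rw [Finset.prod_Icc_succ_top (by omega)] at ht
    set b := 3 * 2 ^ n (k+1) with hb
    have hbpos : 0 < b := by positivity
    have htd : t / b < ∏ i ∈ Finset.Icc 1 k, 3 * 2 ^ n i := by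
      rcases Nat.lt_or_ge (t / b) (∏ i ∈ Finset.Icc 1 k, 3 * 2 ^ n i) with h | h
      · exact h
      · exfalso
        have := Nat.mul_le_mul_right b h
        have := Nat.div_mul_le_self t b
        omega
    obtain ⟨A, hA, hAsum⟩ : ∃ A, A ⊆ Finset.Icc 1 (N k) ∧
        ∑ i ∈ A, a i = (∑ i ∈ Finset.Icc 1 k, (2 ^ n i : ℝ) * q i) + ((t / b : ℕ) : ℝ) * q k := by
      have := ih (t / b) htd
      obtain ⟨A, hA, hAsum⟩ := Finset.mem_image.1 this
      exact ⟨A, Finset.mem_powerset.1 hA, hAsum⟩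
    have hn1 : 1 ≤ n (k+1) := hn (k+1) (by omega)
    have hmod : t % b < b := Nat.mod_lt _ hbpos
    obtain ⟨S, hS, hsum⟩ := mmB_rep (n (k+1)) hn1 (2 ^ n (k+1) + t % b) (by omega)
      (by have : 2^(n (k+1) + 2) = 4 * 2^(n (k+1)) := by ring
          omega)
    set S' := S.image (fun j => N k + j) with hS'
    have hdisj : Disjoint A S' := by
      rw [Finset.disjoint_left]
      intro x hxA hxS
      obtain ⟨j, hj, rfl⟩ := Finset.mem_image.1 hxS
      have hj' := Finset.mem_Icc.1 (hS hj)
      have := Finset.mem_Icc.1 (hA hxA)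
      omega
    have hS'sum : ∑ i ∈ S', a i = ((2 ^ n (k+1) + t % b : ℕ) : ℝ) * q (k+1) := by
      rw [hS', Finset.sum_image (fun x _ y _ h => by omega)]
      have heq : ∀ j ∈ S, a (N k + j) = (mmB (n (k+1)) j : ℝ) * q (k+1) := by
        intro j hj
        have hj' := Finset.mem_Icc.1 (hS hj)
        exact ha k j (by omega) (by omega)
      rw [Finset.sum_congr rfl heq, ← Finset.sum_mul, ← Nat.cast_sum, hsum]
    have hsub : A ∪ S' ⊆ Finset.Icc 1 (N (k+1)) := by
      intro x hx
      rcases Finset.mem_union.1 hx with hx | hx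
      · have := Finset.mem_Icc.1 (hA hx)
        have := mm_N_mono hN k (k+1) (by omega)
        exact Finset.mem_Icc.2 (by omega)
      · obtain ⟨j, hj, rfl⟩ := Finset.mem_image.1 hx
        have hj' := Finset.mem_Icc.1 (hS hj)
        have := hN k
        exact Finset.mem_Icc.2 (by omega)
    have hmem := mm_Fset_mem a (N (k+1)) (A ∪ S') hsub
    rw [Finset.sum_union hdisj, hAsum, hS'sum] at hmem
    have hqq := mm_qq hq1 hq k hk
    have hcast : (t : ℝ) = 3 * 2 ^ n (k+1) * ((t / b : ℕ) : ℝ) + ((t % b : ℕ) : ℝ) := by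
      have := (Nat.div_add_mod t b).symm
      have h2 : (t : ℝ) = ((b * (t / b) + t % b : ℕ) : ℝ) := by rw [Nat.div_add_mod]
      rw [h2]; push_cast [hb]; ring
    have hfin : (∑ i ∈ Finset.Icc 1 k, (2 ^ n i : ℝ) * q i) + ((t / b : ℕ) : ℝ) * q k
        + ((2 ^ n (k+1) + t % b : ℕ) : ℝ) * q (k+1)
        = (∑ i ∈ Finset.Icc 1 (k+1), (2 ^ n i : ℝ) * q i) + t * q (k+1) := by
      rw [Finset.sum_Icc_succ_top (by omega : 1 ≤ k + 1)]
      push_cast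
      linear_combination (-(q (k+1))) * hcast + (-((t / b : ℕ) : ℝ)) * hqq
    rwa [hfin] at hmem

lemma mm_Pq : ∀ k, 1 ≤ k →
    (((∏ i ∈ Finset.Icc 1 k, 3 * 2 ^ n i) - 1 : ℕ) : ℝ) * q k
      = ∑ i ∈ Finset.Icc 1 k, (3 * (2:ℝ) ^ n i - 1) * q i := by
  intro k hk
  have hprod_pos : ∀ m, 0 < ∏ i ∈ Finset.Icc 1 m, 3 * 2 ^ n i := by
    intro m; apply Finset.prod_pos; intro i _; positivity
  induction k, hk using Nat.le_induction with
  | base =>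
    simp only [Finset.Icc_self, Finset.prod_singleton, Finset.sum_singleton]
    have h2 : (1:ℕ) ≤ 3 * 2 ^ n 1 := Nat.one_le_iff_ne_zero.2 (by positivity)
    push_cast [h2]
    ring
  | succ k hk ih =>
    rw [Finset.prod_Icc_succ_top (by omega : 1 ≤ k + 1),
      Finset.sum_Icc_succ_top (by omega : 1 ≤ k + 1), ← ih]
    have hqq := mm_qq hq1 hq k hk
    have h1 : (1:ℕ) ≤ ∏ i ∈ Finset.Icc 1 k, 3 * 2 ^ n i := hprod_pos k
    have h2 : (1:ℕ) ≤ 3 * 2 ^ n (k+1) := Nat.one_le_iff_ne_zero.2 (by positivity)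
    have h3 : (1:ℕ) ≤ (∏ i ∈ Finset.Icc 1 k, 3 * 2 ^ n i) * (3 * 2 ^ n (k+1)) :=
      Nat.one_le_iff_ne_zero.2 (by positivity)
    push_cast [Nat.cast_sub h1, Nat.cast_sub h3]
    linear_combination ((∏ i ∈ Finset.Icc 1 k, (3 * (2:ℝ) ^ n i)) - 1) * hqq

end MM

section MM2
variable {n N : ℕ → ℕ} {q a : ℕ → ℝ}
variable (hn : ∀ k, 1 ≤ k → 1 ≤ n k)
    (hq1 : q 1 = 1) (hq : ∀ k, 1 ≤ k → q (k + 1) = q k / (3 * 2 ^ n (k + 1)))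
include hn hq1 hq

lemma mm_term : ∀ k, 1 ≤ k → (2 ^ n (k + 1) : ℝ) * q (k + 1) = q k / 3 := by
  intro k hk
  have := mm_qq hq1 hq k hk
  linarith

lemma mm_term_le : ∀ k, 1 ≤ k → ∀ j,
    (2 ^ n (k + 1 + j) : ℝ) * q (k + 1 + j) ≤ (q k / 3) * (1/6) ^ j := by
  intro k hk j
  have h1 : (2 ^ n (k + 1 + j) : ℝ) * q (k + 1 + j) = q (k + j) / 3 := by
    rw [show k + 1 + j = (k + j) + 1 by omega]
    exact mm_term hn hq1 hq (k + j) (by omega)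
  rw [h1]
  have := mm_q_decay hn hq1 hq k hk j
  linarith

lemma mm_term_nonneg : ∀ m, 1 ≤ m → 0 ≤ (2 ^ n m : ℝ) * q m := by
  intro m hm
  have := mm_q_pos hq1 hq m hm
  positivity

lemma mmLt_summable : ∀ k, Summable (fun j => (2 ^ n (k + 1 + j) : ℝ) * q (k + 1 + j)) := by
  have main : ∀ k, 1 ≤ k → Summable (fun j => (2 ^ n (k + 1 + j) : ℝ) * q (k + 1 + j)) := by
    intro k hk
    apply Summable.of_nonneg_of_le (fun j => mm_term_nonneg hn hq1 hq (k+1+j) (by omega))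
      (mm_term_le hn hq1 hq k hk)
    exact (summable_geometric_of_lt_one (by norm_num) (by norm_num)).mul_left _
  intro k
  rcases Nat.eq_zero_or_pos k with rfl | hk
  · apply (summable_nat_add_iff 1).1
    apply (main 1 le_rfl).congr
    intro j
    rw [show (0:ℕ)+1+(j+1) = 1+1+j from by omega]
  · exact main k hk

lemma mmLt_nonneg : ∀ k, 0 ≤ mmLt n q k := by
  intro k
  apply tsum_nonneg
  intro j
  exact mm_term_nonneg hn hq1 hq (k+1+j) (by omega)

lemma mmLt_le : ∀ k, 1 ≤ k → mmLt n q k ≤ q k := by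
  intro k hk
  have hqk := mm_q_pos hq1 hq k hk
  have h1 : mmLt n q k ≤ ∑' j : ℕ, (q k / 3) * (1/6) ^ j := by
    apply Summable.tsum_le_tsum (mm_term_le hn hq1 hq k hk) (mmLt_summable hn hq1 hq k)
    exact (summable_geometric_of_lt_one (by norm_num) (by norm_num)).mul_left _
  rw [tsum_mul_left, tsum_geometric_of_lt_one (by norm_num) (by norm_num)] at h1
  calc mmLt n q k ≤ (q k / 3) * (1 - 1/6)⁻¹ := h1
    _ ≤ q k := by rw [show ((1:ℝ) - 1/6)⁻¹ = 6/5 by norm_num]; linarith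

lemma mmLt_succ : ∀ k, mmLt n q k = 2 ^ n (k + 1) * q (k + 1) + mmLt n q (k + 1) := by
  intro k
  have h := Summable.tsum_eq_zero_add (mmLt_summable hn hq1 hq k)
  rw [show k + 1 + 0 = k + 1 by omega] at h
  rw [mmLt, h]
  congr 1
  apply tsum_congr
  intro j
  rw [show k+1+(j+1) = k+1+1+j from by omega]

lemma mm_q_tendsto : Filter.Tendsto q Filter.atTop (nhds 0) := by
  rw [← Filter.tendsto_add_atTop_iff_nat 1]
  have hgeo : Filter.Tendsto (fun j:ℕ => ((1:ℝ)/6)^j) Filter.atTop (nhds 0) :=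
    tendsto_pow_atTop_nhds_zero_of_lt_one (by norm_num) (by norm_num)
  exact squeeze_zero (fun j => le_of_lt (mm_q_pos hq1 hq (j+1) (by omega)))
    (fun j => by
      have := mm_q_decay hn hq1 hq 1 le_rfl j
      rw [hq1, one_mul] at this
      rw [show j + 1 = 1 + j by omega]
      exact this) hgeo

lemma mm_bound_tendsto :
    Filter.Tendsto (fun k => mmLt n q k + 3 * 2 ^ n (k + 1) * q (k + 1)) Filter.atTop (nhds 0) := by
  apply squeeze_zero' (g := fun k => 2 * q k)
  · filter_upwards [Filter.eventually_ge_atTop 1] with k hk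
    have h1 := mmLt_nonneg hn hq1 hq k
    have h2 := mm_qq hq1 hq k hk
    have h3 := mm_q_pos hq1 hq (k+1) (by omega)
    positivity
  · filter_upwards [Filter.eventually_ge_atTop 1] with k hk
    have h1 := mmLt_le hn hq1 hq k hk
    have h2 := mm_qq hq1 hq k hk
    linarith
  · have := (mm_q_tendsto hn hq1 hq).const_mul (2:ℝ)
    simpa using this

lemma mm_step : ∀ k (y : ℝ), mmLt n q k ≤ y →
    y ≤ mmLt n q k + 3 * 2 ^ n (k + 1) * q (k + 1) →
    ∃ c : ℕ, 2 ^ n (k + 1) ≤ c ∧ c < 2 ^ (n (k + 1) + 2) ∧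
      mmLt n q (k + 1) ≤ y - c * q (k + 1) ∧
      y - c * q (k + 1) ≤ mmLt n q (k + 1) + 3 * 2 ^ n (k + 1 + 1) * q (k + 1 + 1) := by
  intro k y h1 h2
  have hq' : 0 < q (k + 1) := mm_q_pos hq1 hq (k+1) (by omega)
  have hQ : 3 * 2 ^ n (k + 1 + 1) * q (k + 1 + 1) = q (k + 1) :=
    mm_qq hq1 hq (k+1) (by omega)
  have hLt := mmLt_succ hn hq1 hq k
  set L := mmLt n q (k+1) with hL
  set α := (y - L) / q (k + 1) with hα
  have hα_lo : (2 ^ n (k + 1) : ℝ) ≤ α := by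
    rw [hα, le_div_iff₀ hq']
    linarith
  have hα_hi : α ≤ (2 : ℝ) ^ (n (k + 1) + 2) := by
    rw [hα, div_le_iff₀ hq']
    have hp : (2:ℝ) ^ (n (k+1) + 2) = 4 * 2 ^ n (k+1) := by rw [pow_add]; ring
    rw [hp]
    nlinarith
  have h0α : 0 ≤ α := le_trans (by positivity) hα_lo
  have key : ∀ c : ℕ, (c:ℝ) ≤ α → α ≤ (c:ℝ) + 1 →
      (L ≤ y - c * q (k+1) ∧
        y - c * q (k+1) ≤ L + 3 * 2 ^ n (k + 1 + 1) * q (k + 1 + 1)) := by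
    intro c hc1 hc2
    rw [hα] at hc1 hc2
    rw [le_div_iff₀ hq'] at hc1
    rw [div_le_iff₀ hq'] at hc2
    rw [hQ]
    constructor <;> nlinarith
  have hfl_lo : 2 ^ n (k + 1) ≤ ⌊α⌋₊ := Nat.le_floor (by exact_mod_cast hα_lo)
  rcases Nat.lt_or_ge ⌊α⌋₊ (2 ^ (n (k + 1) + 2)) with hc | hc
  · obtain ⟨g1, g2⟩ := key ⌊α⌋₊ (Nat.floor_le h0α) (le_of_lt (Nat.lt_floor_add_one α))
    exact ⟨⌊α⌋₊, hfl_lo, hc, g1, g2⟩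
  · have hone : (1:ℕ) ≤ 2 ^ (n (k+1) + 2) := Nat.one_le_two_pow
    have hcast : ((2 ^ (n (k + 1) + 2) - 1 : ℕ) : ℝ) = (2:ℝ) ^ (n (k+1) + 2) - 1 := by
      push_cast [Nat.cast_sub hone]
      norm_num
    have hcge : ((2:ℝ) ^ (n (k+1) + 2)) ≤ (⌊α⌋₊ : ℝ) := by exact_mod_cast hc
    obtain ⟨g1, g2⟩ := key (2 ^ (n (k + 1) + 2) - 1)
      (by rw [hcast]; have := Nat.floor_le h0α; linarith)
      (by rw [hcast]; linarith)
    refine ⟨2 ^ (n (k + 1) + 2) - 1, ?_, by omega, g1, g2⟩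
    have h4 : (2:ℕ) ^ (n (k+1) + 2) = 4 * 2 ^ n (k+1) := by rw [pow_add]; ring
    have := Nat.one_le_two_pow (n := n (k+1))
    omega

end MM2

/-- In the Marchwicki–Miska construction, `Δ_{r (N k)} (F (N k))` is bounded below by
`∑_{i=1}^k (3·2^(n i) − 1) q i ≥ 3·2^(n 1) − 1 > 0`; hence the achievement set
contains an interval. -/
theorem mm_delta_bound (n N : ℕ → ℕ) (q a : ℕ → ℝ)
    (hn : ∀ k, 1 ≤ k → 1 ≤ n k)
    (hN0 : N 0 = 0) (hN : ∀ k, N (k + 1) = N k + (n (k + 1) + 2))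
    (hq1 : q 1 = 1) (hq : ∀ k, 1 ≤ k → q (k + 1) = q k / (3 * 2 ^ n (k + 1)))
    (ha : ∀ k i, 1 ≤ i → i ≤ n (k + 1) + 2 →
      a (N k + i) = (mmB (n (k + 1)) i : ℝ) * q (k + 1)) :
    (∀ k, 1 ≤ k →
      (∑ i ∈ Finset.Icc 1 k, (3 * (2 : ℝ) ^ n i - 1) * q i) ≤
        deltaEps (rem a (N k)) (Fset a (N k))) ∧
    (∀ k, 1 ≤ k →
      (3 * (2 : ℝ) ^ n 1 - 1) ≤ deltaEps (rem a (N k)) (Fset a (N k))) ∧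
    (0 : ℝ) < 3 * (2 : ℝ) ^ n 1 - 1 ∧
    (∃ x y : ℝ, x < y ∧ Set.Ioo x y ⊆ achSet a) := by
  have hqpos := mm_q_pos hq1 hq
  have part1 : ∀ k, 1 ≤ k → (∑ i ∈ Finset.Icc 1 k, (3 * (2:ℝ) ^ n i - 1) * q i) ≤
      deltaEps (rem a (N k)) (Fset a (N k)) := by
    intro k hk
    have hqk := hqpos k hk
    set P := ∏ i ∈ Finset.Icc 1 k, 3 * 2 ^ n i with hP
    have hPpos : 0 < P := Finset.prod_pos (fun i _ => by positivity)
    set Lk := ∑ i ∈ Finset.Icc 1 k, (2 ^ n i : ℝ) * q i with hLk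
    set f : ℕ → ℝ := fun t => Lk + t * q k with hf
    set D := (Finset.range P).image f with hD
    have hfmono : ∀ s t : ℕ, s < t → f s < f t := by
      intro s t hst
      simp only [hf]
      have h1 : (s:ℝ) < t := by exact_mod_cast hst
      nlinarith
    have hfmem : ∀ t, t < P → f t ∈ D := fun t ht =>
      Finset.mem_image.2 ⟨t, Finset.mem_range.2 ht, rfl⟩
    have hDne : D.Nonempty := ⟨f 0, hfmem 0 hPpos⟩
    have hDsub : D ⊆ Fset a (N k) := by
      intro x hx
      obtain ⟨t, ht, rfl⟩ := Finset.mem_image.1 hx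
      exact mm_Dmem hn hN0 hN hq1 hq ha k hk t (Finset.mem_range.1 ht)
    have hclose : IsEpsClose (rem a (N k)) D := by
      intro x hx y hy hxy hgap
      obtain ⟨t, ht, rfl⟩ := Finset.mem_image.1 hx
      obtain ⟨u, hu, rfl⟩ := Finset.mem_image.1 hy
      have htu : t < u := by
        by_contra hcon
        push_neg at hcon
        rcases Nat.eq_or_lt_of_le hcon with h | h
        · rw [h] at hxy; exact lt_irrefl _ hxy
        · exact absurd (hfmono u t h) (by linarith)
      rcases Nat.lt_or_ge (t+1) u with h2 | h2
      · exact absurd ⟨hfmono t (t+1) (by omega), hfmono (t+1) u h2⟩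
          (hgap (f (t+1)) (hfmem (t+1) (by have := Finset.mem_range.1 hu; omega)))
      · have hu1 : u = t + 1 := by omega
        subst hu1
        have heq : f (t+1) - f t = q k := by
          simp only [hf]; push_cast; ring
        rw [heq]
        exact le_of_lt (mm_rem_gt hn hN0 hN hq1 hq ha k hk)
    have hfle : ∀ u t : ℕ, u ≤ t → f u ≤ f t := by
      intro u t hut
      rcases Nat.eq_or_lt_of_le hut with h | h
      · rw [h]
      · exact le_of_lt (hfmono u t h)
    have hmin : D.min' hDne = f 0 := by
      apply le_antisymm (Finset.min'_le _ _ (hfmem 0 hPpos))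
      apply Finset.le_min'
      intro y hy
      obtain ⟨t, ht, rfl⟩ := Finset.mem_image.1 hy
      exact hfle 0 t (by omega)
    have hmax : D.max' hDne = f (P - 1) := by
      apply le_antisymm
      · apply Finset.max'_le
        intro y hy
        obtain ⟨t, ht, rfl⟩ := Finset.mem_image.1 hy
        exact hfle t (P-1) (by have := Finset.mem_range.1 ht; omega)
      · exact Finset.le_max' _ _ (hfmem (P-1) (by omega))
    have hge := mm_deltaEps_ge (Fset a (N k)) ⟨0, mm_Fset_zero a _⟩ (rem a (N k)) D hDne hDsub hclose
    rw [hmax, hmin] at hge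
    have hPq := mm_Pq hn hN0 hN hq1 hq ha k hk
    calc ∑ i ∈ Finset.Icc 1 k, (3 * (2:ℝ) ^ n i - 1) * q i
        = ((P - 1 : ℕ) : ℝ) * q k := hPq.symm
      _ = f (P - 1) - f 0 := by simp only [hf]; push_cast; ring
      _ ≤ deltaEps (rem a (N k)) (Fset a (N k)) := hge
  have part2 : ∀ k, 1 ≤ k → (3 * (2:ℝ) ^ n 1 - 1) ≤ deltaEps (rem a (N k)) (Fset a (N k)) := by
    intro k hk
    refine le_trans ?_ (part1 k hk)
    have hmem : 1 ∈ Finset.Icc 1 k := Finset.mem_Icc.2 ⟨le_rfl, hk⟩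
    have hle := Finset.single_le_sum (f := fun i => (3 * (2:ℝ) ^ n i - 1) * q i)
      (fun i hi => by
        have hi' := Finset.mem_Icc.1 hi
        have h1 : (1:ℝ) ≤ 2 ^ n i := one_le_pow₀ (by norm_num)
        have h2 := hqpos i hi'.1
        nlinarith) hmem
    rw [hq1, mul_one] at hle
    exact hle
  have part3 : (0:ℝ) < 3 * (2:ℝ) ^ n 1 - 1 := by
    have h1 : (1:ℝ) ≤ 2 ^ n 1 := one_le_pow₀ (by norm_num)
    linarith
  refine ⟨part1, part2, part3, ?_⟩
  clear part1 part2 part3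
  refine ⟨mmLt n q 0, mmLt n q 0 + 3 * 2 ^ n (0 + 1) * q (0 + 1), ?_, ?_⟩
  · have h1 : (0:ℝ) < q (0 + 1) := hqpos 1 le_rfl
    have h2 : (0:ℝ) < 3 * 2 ^ n (0 + 1) := by positivity
    nlinarith
  intro z hz
  obtain ⟨hz1, hz2⟩ := hz
  have hstepAll := mm_step hn hq1 hq
  choose pick hp1 hp2 hp3 hp4 using hstepAll
  let Y : ∀ k : ℕ, {v : ℝ // mmLt n q k ≤ v ∧ v ≤ mmLt n q k + 3 * 2 ^ n (k + 1) * q (k + 1)} :=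
    fun k => Nat.rec ⟨z, le_of_lt hz1, le_of_lt hz2⟩
      (fun m ih => ⟨ih.1 - (pick m ih.1 ih.2.1 ih.2.2 : ℕ) * q (m + 1),
        hp3 m ih.1 ih.2.1 ih.2.2, hp4 m ih.1 ih.2.1 ih.2.2⟩) k
  let C : ℕ → ℕ := fun m => pick m (Y m).1 (Y m).2.1 (Y m).2.2
  have hYsucc : ∀ m, (Y (m + 1)).1 = (Y m).1 - (C m : ℝ) * q (m + 1) := fun m => rfl
  have hYlo : ∀ m, mmLt n q m ≤ (Y m).1 := fun m => (Y m).2.1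
  have hYhi : ∀ m, (Y m).1 ≤ mmLt n q m + 3 * 2 ^ n (m + 1) * q (m + 1) := fun m => (Y m).2.2
  have hClo : ∀ m, 2 ^ n (m + 1) ≤ C m := fun m => hp1 m _ _ _
  have hChi : ∀ m, C m < 2 ^ (n (m + 1) + 2) := fun m => hp2 m _ _ _
  have hYval : ∀ m, (Y m).1 = z - ∑ i ∈ Finset.range m, (C i : ℝ) * q (i + 1) := by
    intro m
    induction m with
    | zero => show z = z - ∑ i ∈ Finset.range 0, (C i : ℝ) * q (i + 1); simp
    | succ m ih => rw [hYsucc m, ih, Finset.sum_range_succ]; ring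
  have hdiff0 : Filter.Tendsto (fun m => z - ∑ i ∈ Finset.range m, (C i : ℝ) * q (i + 1))
      Filter.atTop (nhds 0) := by
    apply squeeze_zero' (g := fun m => mmLt n q m + 3 * 2 ^ n (m + 1) * q (m + 1))
    · apply Filter.Eventually.of_forall
      intro m
      rw [← hYval m]
      exact le_trans (mmLt_nonneg hn hq1 hq m) (hYlo m)
    · apply Filter.Eventually.of_forall
      intro m
      rw [← hYval m]
      exact hYhi m
    · exact mm_bound_tendsto hn hq1 hq
  have hslim : Filter.Tendsto (fun m => ∑ i ∈ Finset.range m, (C i : ℝ) * q (i + 1))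
      Filter.atTop (nhds z) := by
    have h := Filter.Tendsto.const_sub z hdiff0
    simpa using h
  have hrep : ∀ m, ∃ S, S ⊆ Finset.Icc 1 (n (m + 1) + 2) ∧ ∑ j ∈ S, mmB (n (m + 1)) j = C m :=
    fun m => mmB_rep (n (m + 1)) (hn (m + 1) (by omega)) (C m) (hClo m) (hChi m)
  choose S hS1 hS2 using hrep
  classical
  set A : Set ℕ := {v | ∃ m, ∃ j ∈ S m, v = N m + j} with hA
  have hnn := mm_a_nonneg hN0 hN hn hq1 hq ha
  have hAge1 : ∀ v ∈ A, 1 ≤ v := by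
    rintro v ⟨m, j, hj, rfl⟩
    have := Finset.mem_Icc.1 (hS1 m hj)
    omega
  have hg0 : A.indicator a 0 = 0 := by
    apply Set.indicator_of_notMem
    intro h0
    exact absurd (hAge1 0 h0) (by omega)
  have hgnn : ∀ v, 0 ≤ A.indicator a v :=
    fun v => Set.indicator_nonneg (fun x hx => hnn x (hAge1 x hx)) v
  have hchar : ∀ m j, 1 ≤ j → j ≤ n (m + 1) + 2 → ((N m + j) ∈ A ↔ j ∈ S m) := by
    intro m j hj1 hj2
    constructor
    · rintro ⟨m', j', hj', heq⟩
      have hjb := Finset.mem_Icc.1 (hS1 m' hj')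
      have hmm : m = m' ∧ j = j' := by
        rcases lt_trichotomy m m' with h | h | h
        · exfalso
          have h1 := mm_N_mono hN (m + 1) m' (by omega)
          rw [hN m] at h1
          omega
        · subst h
          exact ⟨rfl, by omega⟩
        · exfalso
          have h1 := mm_N_mono hN (m' + 1) m (by omega)
          rw [hN m'] at h1
          omega
      obtain ⟨rfl, rfl⟩ := hmm
      exact hj'
    · intro hj
      exact ⟨m, j, hj, rfl⟩
  have hIco : ∀ k, Finset.Ico (N k + 1) (N (k + 1) + 1) = Finset.Ioc (N k) (N (k + 1)) := by
    intro k
    ext v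
    simp only [Finset.mem_Ico, Finset.mem_Ioc]
    omega
  have hpart : ∀ k, ∑ v ∈ Finset.range (N k + 1), A.indicator a v
      = ∑ i ∈ Finset.range k, (C i : ℝ) * q (i + 1) := by
    intro k
    induction k with
    | zero =>
      rw [hN0]
      simp [hg0]
    | succ k ih =>
      have hle1 : N k + 1 ≤ N (k + 1) + 1 := by have := hN k; omega
      rw [Finset.range_eq_Ico, ← Finset.sum_Ico_consecutive _ (by omega : 0 ≤ N k + 1) hle1,
        ← Finset.range_eq_Ico, ih, hIco k, Finset.sum_range_succ]
      congr 1
      rw [show N (k + 1) = N k + (n (k + 1) + 2) from hN k, mm_Ioc_sum]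
      have he : ∀ j ∈ Finset.Icc 1 (n (k + 1) + 2), A.indicator a (N k + j)
          = if j ∈ S k then a (N k + j) else 0 := by
        intro j hj
        have hj' := Finset.mem_Icc.1 hj
        by_cases hjs : j ∈ S k
        · rw [if_pos hjs]
          exact Set.indicator_of_mem ((hchar k j hj'.1 hj'.2).2 hjs) a
        · rw [if_neg hjs]
          apply Set.indicator_of_notMem
          intro hmem
          exact hjs ((hchar k j hj'.1 hj'.2).1 hmem)
      rw [Finset.sum_congr rfl he, Finset.sum_ite_mem, Finset.inter_eq_right.2 (hS1 k)]
      have he2 : ∀ j ∈ S k, a (N k + j) = (mmB (n (k + 1)) j : ℝ) * q (k + 1) := by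
        intro j hj
        have := Finset.mem_Icc.1 (hS1 k hj)
        exact ha k j (by omega) (by omega)
      rw [Finset.sum_congr rfl he2, ← Finset.sum_mul, ← Nat.cast_sum, hS2 k]
  have hG : Summable (fun v => if v = 0 then (0:ℝ) else a v) := by
    apply (summable_nat_add_iff 1).1
    apply (mm_summable hn hN0 hN hq1 hq ha).congr
    intro v
    simp
  have hga : Summable (A.indicator a) := by
    apply Summable.of_nonneg_of_le hgnn _ hG
    intro v
    rcases Nat.eq_zero_or_pos v with rfl | hv
    · rw [hg0]
      simp
    · rw [if_neg (by omega : ¬ v = 0)]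
      by_cases h : v ∈ A
      · rw [Set.indicator_of_mem h]
      · rw [Set.indicator_of_notMem h]
        exact hnn v hv
  have h1 : Filter.Tendsto (fun M => ∑ v ∈ Finset.range M, A.indicator a v)
      Filter.atTop (nhds (∑' v, A.indicator a v)) := hga.hasSum.tendsto_sum_nat
  have h2 : Filter.Tendsto (fun k => N k + 1) Filter.atTop Filter.atTop :=
    Filter.tendsto_atTop_mono
      (fun k => by simp only [id_eq]; have := mm_N_ge hn hN k; omega) Filter.tendsto_id
  have h3 := h1.comp h2
  have h4 : Filter.Tendsto (fun k => ∑ i ∈ Finset.range k, (C i : ℝ) * q (i + 1))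
      Filter.atTop (nhds (∑' v, A.indicator a v)) := by
    apply h3.congr
    intro k
    exact hpart k
  have hz_eq : z = ∑' v, A.indicator a v := tendsto_nhds_unique hslim h4
  refine ⟨A, ?_⟩
  rw [hz_eq]
  exact hga.hasSum
end
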